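/- arXiv:2303.10530 — 12 statements merged into one kernel-verified Lean document; each statement's English description precedes it below -/
import Mathlib

section
/- For all integers a ≥ b > 0, and all non-negative integer sequences (x_1, x_2, ...) and (y_1, y_2, ...) satisfying ∑_{i≥1} (x_i + y_i) = a and x_j + y_j ≤ b for every j ≥ 1, the sum ∑_{i≥1} x_i·y_i is at most ⌊a/b⌋·b²/4 + (a - b·⌊a/b⌋)²/4. -/
lemma aux1 (b s r : ℕ) (hb : 0 < b) (hs : s ≤ b) (hr : r < b) :
    s ^ 2 + r ^ 2 ≤ (s + r) / b * b ^ 2 + ((s + r) % b) ^ 2 := by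
  rcases lt_or_ge (s + r) b with h | h
  · rw [Nat.div_eq_of_lt h, Nat.mod_eq_of_lt h]
    nlinarith
  · have hdiv : (s + r) / b = 1 := Nat.div_eq_of_lt_le (by omega) (by omega)
    have hmod : (s + r) % b = s + r - b := by
      rw [Nat.mod_eq_sub_mod h, Nat.mod_eq_of_lt (by omega)]
    rw [hdiv, hmod]
    zify [h, hs, hr.le]
    nlinarith [mul_nonneg (sub_nonneg.2 (by exact_mod_cast hs : (s:ℤ) ≤ b))
      (sub_nonneg.2 (by exact_mod_cast hr.le : (r:ℤ) ≤ b))]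

lemma aux2 (b : ℕ) (hb : 0 < b) (f : ℕ → ℕ) (hf : ∀ i, f i ≤ b) (S : Finset ℕ) :
    ∑ i ∈ S, (f i) ^ 2 ≤ (∑ i ∈ S, f i) / b * b ^ 2 + ((∑ i ∈ S, f i) % b) ^ 2 := by
  induction S using Finset.induction with
  | empty => simp
  | @insert j s hj ih =>
    rw [Finset.sum_insert hj, Finset.sum_insert hj]
    set a' := ∑ i ∈ s, f i with ha'
    have hqr : a' = b * (a' / b) + a' % b := (Nat.div_add_mod a' b).symm
    have key : f j + a' = (f j + a' % b) + (a' / b) * b := by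
      conv_lhs => rw [hqr]
      ring
    rw [key, Nat.add_mul_div_right _ _ hb, Nat.add_mul_mod_self_right]
    have h1 := aux1 b (f j) (a' % b) hb (hf j) (Nat.mod_lt _ hb)
    nlinarith [ih]

/-- Lemma 2.6: for integers `a ≥ b > 0` and finitely supported sequences of
non-negative integers `x, y` with `∑ (xᵢ + yᵢ) = a` and `xⱼ + yⱼ ≤ b` for all `j`,
we have `∑ xᵢ yᵢ ≤ ⌊a/b⌋ b²/4 + (a - b⌊a/b⌋)²/4` (stated multiplied by 4). -/
theorem stmt0 (a b : ℕ) (hb : 0 < b) (hab : b ≤ a) (x y : ℕ →₀ ℕ)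
    (hsum : ∑ i ∈ x.support ∪ y.support, (x i + y i) = a)
    (hle : ∀ j : ℕ, x j + y j ≤ b) :
    4 * ∑ i ∈ x.support ∪ y.support, x i * y i
      ≤ a / b * b ^ 2 + (a - b * (a / b)) ^ 2 := by
  have hmod : a - b * (a / b) = a % b := by
    have := Nat.div_add_mod a b; omega
  rw [hmod]
  have h1 : 4 * ∑ i ∈ x.support ∪ y.support, x i * y i
      ≤ ∑ i ∈ x.support ∪ y.support, (x i + y i) ^ 2 := by
    rw [Finset.mul_sum]
    refine Finset.sum_le_sum fun i _ => ?_
    zify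
    nlinarith [sq_nonneg ((x i : ℤ) - y i)]
  have h2 := aux2 b hb (fun i => x i + y i) hle (x.support ∪ y.support)
  simp only [hsum] at h2
  omega
end

section
/- Every tournament T on n vertices has at most (n³ - n)/24 cyclic triangles if n is odd, and at most (n³ - 4n)/24 cyclic triangles if n is even. -/
open scoped Classical
open Finset

/-- A tournament: an irreflexive relation such that for distinct `u v`, exactly one of
`r u v`, `r v u` holds. -/
def IsTournament {V : Type*} (r : V → V → Prop) : Prop :=
  (∀ v, ¬ r v v) ∧ ∀ u v : V, u ≠ v → (r u v ↔ ¬ r v u)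

/-- The set of cyclic triangles of a tournament on `Fin n`: 3-element vertex sets
`{u,v,w}` with `u → v`, `v → w`, `w → u`. -/
noncomputable def cyclicTriangles (n : ℕ) (r : Fin n → Fin n → Prop) :
    Finset (Finset (Fin n)) :=
  (Finset.powersetCard 3 (Finset.univ : Finset (Fin n))).filter
    (fun s => ∃ u v w, u ∈ s ∧ v ∈ s ∧ w ∈ s ∧ r u v ∧ r v w ∧ r w u)



noncomputable def outdeg {n : ℕ} (r : Fin n → Fin n → Prop) (v : Fin n) : ℕ :=
  (univ.filter (fun u => r v u)).card

noncomputable def srcSet {n : ℕ} (r : Fin n → Fin n → Prop) (t : Finset (Fin n)) :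
    Finset (Fin n) :=
  t.filter (fun v => ∀ u ∈ t, u ≠ v → r v u)

lemma two_mul_choose_two (d : ℕ) : 2 * d.choose 2 + d = d * d := by
  induction d with
  | zero => rfl
  | succ k ih =>
    rw [Nat.choose_succ_succ, Nat.choose_one_right]
    nlinarith [ih]

lemma six_mul_choose_three (m : ℕ) : 6 * m.choose 3 + 3 * m ^ 2 = m ^ 3 + 2 * m := by
  induction m with
  | zero => rfl
  | succ k ih =>
    rw [Nat.choose_succ_succ]
    have h2 := two_mul_choose_two k
    nlinarith [ih, h2]

lemma sum_outdeg {n : ℕ} (r : Fin n → Fin n → Prop) (hr : IsTournament r) :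
    2 * ∑ v : Fin n, outdeg r v + n = n * n := by
  have hd : ∀ v : Fin n, outdeg r v = ∑ u : Fin n, if r v u then 1 else 0 := by
    intro v; rw [outdeg, Finset.card_filter]
  have hswap : ∑ v : Fin n, ∑ u : Fin n, (if r v u then 1 else 0)
      = ∑ v : Fin n, ∑ u : Fin n, (if r u v then 1 else 0) := Finset.sum_comm
  have hkey : ∑ v : Fin n, ∑ u : Fin n, ((if r v u then 1 else 0) + (if r u v then 1 else 0))
      = ∑ v : Fin n, ∑ u : Fin n, (if u = v then 0 else 1) := by
    refine Finset.sum_congr rfl fun v _ => Finset.sum_congr rfl fun u _ => ?_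
    by_cases h : u = v
    · subst h; simp [hr.1 u]
    · rw [if_neg h]
      rcases Classical.em (r v u) with hv | hv
      · have : ¬ r u v := by
          have := (hr.2 v u (fun e => h e.symm)).mp hv; exact this
        simp [hv, this]
      · have : r u v := (hr.2 u v h).mpr hv
        simp [hv, this]
  have hin : ∀ v : Fin n, ∑ u : Fin n, (if u = v then 0 else 1) = n - 1 := by
    intro v
    have h1 : ∑ u : Fin n, ((if u = v then 0 else 1) + (if u = v then 1 else 0)) = n := by
      have he : ∀ u : Fin n, ((if u = v then (0:ℕ) else 1) + (if u = v then 1 else 0)) = 1 := by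
        intro u; split <;> simp
      simp [he]
    have h2 : ∑ u : Fin n, (if u = v then (1:ℕ) else 0) = 1 := by
      simp [Finset.sum_ite_eq]
    rw [Finset.sum_add_distrib, h2] at h1
    omega
  have h2 : 2 * ∑ v : Fin n, outdeg r v
      = ∑ v : Fin n, ∑ u : Fin n, ((if r v u then 1 else 0) + (if r u v then 1 else 0)) := by
    simp only [Finset.sum_add_distrib]
    rw [← hswap, two_mul]
    simp only [hd]
  rw [h2, hkey, Finset.sum_congr rfl (fun v _ => hin v), Finset.sum_const,
    Finset.card_univ, Fintype.card_fin, smul_eq_mul]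
  cases n with
  | zero => simp
  | succ k => simp [Nat.succ_sub_one]; ring

lemma mem_cyc_iff {n : ℕ} {r : Fin n → Fin n → Prop} {t : Finset (Fin n)} :
    t ∈ cyclicTriangles n r ↔ t.card = 3 ∧
      ∃ u v w, u ∈ t ∧ v ∈ t ∧ w ∈ t ∧ r u v ∧ r v w ∧ r w u := by
  simp [cyclicTriangles, Finset.mem_filter, Finset.mem_powersetCard, Finset.subset_univ,
    and_comm]

lemma card3 {n : ℕ} {a b c : Fin n} (hab : a ≠ b) (hac : a ≠ c) (hbc : b ≠ c) :
    ({a, b, c} : Finset (Fin n)).card = 3 :=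
  Finset.card_eq_three.mpr ⟨a, b, c, hab, hac, hbc, rfl⟩

lemma cyc_case {n : ℕ} {r : Fin n → Fin n → Prop} (hr : IsTournament r) {a b c : Fin n}
    (hab : a ≠ b) (hac : a ≠ c) (hbc : b ≠ c)
    (h1 : r a b) (h2 : r b c) (h3 : r c a) :
    ({a, b, c} : Finset (Fin n)) ∈ cyclicTriangles n r ∧
      srcSet r ({a, b, c} : Finset (Fin n)) = ∅ := by
  constructor
  · exact mem_cyc_iff.mpr ⟨card3 hab hac hbc,
      a, b, c, by simp, by simp, by simp, h1, h2, h3⟩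
  · rw [srcSet, Finset.filter_eq_empty_iff]
    intro x hx
    have n1 : ¬ r b a := (hr.2 a b hab).mp h1
    have n2 : ¬ r c b := (hr.2 b c hbc).mp h2
    have n3 : ¬ r a c := (hr.2 c a hac.symm).mp h3
    simp only [Finset.mem_insert, Finset.mem_singleton] at hx
    rcases hx with rfl | rfl | rfl
    · intro h; exact n3 (h c (by simp) hac.symm)
    · intro h; exact n1 (h a (by simp) hab)
    · intro h; exact n2 (h b (by simp) hbc)

lemma trans_case {n : ℕ} {r : Fin n → Fin n → Prop} (hr : IsTournament r) {a b c : Fin n}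
    (hab : a ≠ b) (hac : a ≠ c) (hbc : b ≠ c)
    (h1 : r a b) (h2 : r a c) (h3 : r b c) :
    ({a, b, c} : Finset (Fin n)) ∉ cyclicTriangles n r ∧
      srcSet r ({a, b, c} : Finset (Fin n)) = {a} := by
  have n1 : ¬ r b a := (hr.2 a b hab).mp h1
  have n2 : ¬ r c a := (hr.2 a c hac).mp h2
  have n3 : ¬ r c b := (hr.2 b c hbc).mp h3
  have na : ¬ r a a := hr.1 a
  have nb : ¬ r b b := hr.1 b
  have nc : ¬ r c c := hr.1 c
  constructor
  · intro hm
    obtain ⟨-, u, v, w, hu, hv, hw, c1, c2, c3⟩ := mem_cyc_iff.mp hm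
    simp only [Finset.mem_insert, Finset.mem_singleton] at hu hv hw
    rcases hu with rfl | rfl | rfl <;> rcases hv with rfl | rfl | rfl <;>
      rcases hw with rfl | rfl | rfl <;> tauto
  · ext x
    simp only [srcSet, Finset.mem_filter, Finset.mem_insert, Finset.mem_singleton]
    constructor
    · rintro ⟨rfl | rfl | rfl, hs⟩
      · rfl
      · exact absurd (hs a (by simp) hab) n1
      · exact absurd (hs a (by simp) hac) n2
    · rintro rfl
      refine ⟨Or.inl rfl, ?_⟩
      intro u hu hne
      rcases hu with rfl | rfl | rfl
      · exact absurd rfl hne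
      · exact h1
      · exact h2

lemma per_t {n : ℕ} {r : Fin n → Fin n → Prop} (hr : IsTournament r)
    (t : Finset (Fin n)) (ht : t.card = 3) :
    (if t ∈ cyclicTriangles n r then 1 else 0) + (srcSet r t).card = 1 := by
  obtain ⟨a, b, c, hab, hac, hbc, rfl⟩ := Finset.card_eq_three.mp ht
  have eacb : ({a, c, b} : Finset (Fin n)) = {a, b, c} := by
    ext x; simp; tauto
  have ecab : ({c, a, b} : Finset (Fin n)) = {a, b, c} := by
    ext x; simp; tauto
  have ebca : ({b, c, a} : Finset (Fin n)) = {a, b, c} := by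
    ext x; simp; tauto
  have ebac : ({b, a, c} : Finset (Fin n)) = {a, b, c} := by
    ext x; simp; tauto
  have ecba : ({c, b, a} : Finset (Fin n)) = {a, b, c} := by
    ext x; simp; tauto
  by_cases h1 : r a b
  · by_cases h2 : r b c
    · by_cases h3 : r c a
      · obtain ⟨hm, hs⟩ := cyc_case hr hab hac hbc h1 h2 h3
        rw [if_pos hm, hs]; simp
      · have h3' : r a c := (hr.2 a c hac).mpr h3
        obtain ⟨hm, hs⟩ := trans_case hr hab hac hbc h1 h3' h2
        rw [if_neg hm, hs]; simp
    · have h2' : r c b := (hr.2 c b hbc.symm).mpr h2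
      by_cases h3 : r c a
      · obtain ⟨hm, hs⟩ := trans_case hr hac.symm hbc.symm hab h3 h2' h1
        rw [ecab] at hm hs
        rw [if_neg hm, hs]; simp
      · have h3' : r a c := (hr.2 a c hac).mpr h3
        obtain ⟨hm, hs⟩ := trans_case hr hac hab hbc.symm h3' h1 h2'
        rw [eacb] at hm hs
        rw [if_neg hm, hs]; simp
  · have h1' : r b a := (hr.2 b a hab.symm).mpr h1
    by_cases h2 : r b c
    · by_cases h3 : r c a
      · obtain ⟨hm, hs⟩ := trans_case hr hbc hab.symm hac.symm h2 h1' h3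
        rw [ebca] at hm hs
        rw [if_neg hm, hs]; simp
      · have h3' : r a c := (hr.2 a c hac).mpr h3
        obtain ⟨hm, hs⟩ := trans_case hr hab.symm hbc hac h1' h2 h3'
        rw [ebac] at hm hs
        rw [if_neg hm, hs]; simp
    · have h2' : r c b := (hr.2 c b hbc.symm).mpr h2
      by_cases h3 : r c a
      · obtain ⟨hm, hs⟩ := trans_case hr hbc.symm hac.symm hab.symm h2' h3 h1'
        rw [ecba] at hm hs
        rw [if_neg hm, hs]; simp
      · have h3' : r a c := (hr.2 a c hac).mpr h3
        obtain ⟨hm, hs⟩ := cyc_case hr hac hab hbc.symm h3' h2' h1'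
        rw [eacb] at hm hs
        rw [if_pos hm, hs]; simp

lemma src_count {n : ℕ} {r : Fin n → Fin n → Prop} (hr : IsTournament r) (v : Fin n) :
    ((Finset.powersetCard 3 (Finset.univ : Finset (Fin n))).filter
      (fun t => v ∈ t ∧ ∀ u ∈ t, u ≠ v → r v u)).card = (outdeg r v).choose 2 := by
  rw [outdeg, ← Finset.card_powersetCard]
  apply Finset.card_bij (fun t _ => t.erase v)
  · rintro t ht
    simp only [Finset.mem_filter, Finset.mem_powersetCard] at ht
    obtain ⟨⟨-, hc⟩, hv, hs⟩ := ht
    rw [Finset.mem_powersetCard]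
    constructor
    · intro u hu
      rw [Finset.mem_erase] at hu
      simp only [Finset.mem_filter, Finset.mem_univ, true_and]
      exact hs u hu.2 hu.1
    · rw [Finset.card_erase_of_mem hv, hc]
  · intro t1 h1 t2 h2 he
    simp only [Finset.mem_filter] at h1 h2
    rw [← Finset.insert_erase h1.2.1, ← Finset.insert_erase h2.2.1, he]
  · intro s hs
    rw [Finset.mem_powersetCard] at hs
    obtain ⟨hsub, hc⟩ := hs
    have hvn : v ∉ s := fun hv => hr.1 v (by simpa using hsub hv)
    refine ⟨insert v s, ?_, ?_⟩
    · simp only [Finset.mem_filter, Finset.mem_powersetCard]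
      refine ⟨⟨Finset.subset_univ _, ?_⟩, Finset.mem_insert_self v s, ?_⟩
      · rw [Finset.card_insert_of_notMem hvn, hc]
      · intro u hu hne
        rcases Finset.mem_insert.mp hu with rfl | hu
        · exact absurd rfl hne
        · simpa using hsub hu
    · rw [Finset.erase_insert hvn]

lemma key_identity {n : ℕ} (r : Fin n → Fin n → Prop) (hr : IsTournament r) :
    (cyclicTriangles n r).card + ∑ v : Fin n, (outdeg r v).choose 2 = n.choose 3 := by
  have hsrc : ∑ t ∈ Finset.powersetCard 3 (Finset.univ : Finset (Fin n)), (srcSet r t).card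
      = ∑ v : Fin n, (outdeg r v).choose 2 := by
    have hfe : ∀ t : Finset (Fin n), srcSet r t
        = Finset.univ.filter (fun v => v ∈ t ∧ ∀ u ∈ t, u ≠ v → r v u) := by
      intro t; ext x
      simp only [srcSet, Finset.mem_filter, Finset.mem_univ, true_and]
    calc ∑ t ∈ Finset.powersetCard 3 (Finset.univ : Finset (Fin n)), (srcSet r t).card
        = ∑ t ∈ Finset.powersetCard 3 (Finset.univ : Finset (Fin n)), ∑ v : Fin n,
            (if v ∈ t ∧ ∀ u ∈ t, u ≠ v → r v u then 1 else 0) := by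
          refine Finset.sum_congr rfl fun t _ => ?_
          rw [hfe t, Finset.card_filter]
      _ = ∑ v : Fin n, ∑ t ∈ Finset.powersetCard 3 (Finset.univ : Finset (Fin n)),
            (if v ∈ t ∧ ∀ u ∈ t, u ≠ v → r v u then 1 else 0) := Finset.sum_comm
      _ = ∑ v : Fin n, (outdeg r v).choose 2 := by
          refine Finset.sum_congr rfl fun v _ => ?_
          rw [← Finset.card_filter]
          exact src_count hr v
  have hcyc : ∑ t ∈ Finset.powersetCard 3 (Finset.univ : Finset (Fin n)),
      (if t ∈ cyclicTriangles n r then 1 else 0) = (cyclicTriangles n r).card := by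
    rw [← Finset.card_filter]
    congr 1
    ext t
    simp only [Finset.mem_filter]
    exact ⟨fun h => h.2, fun h => ⟨(Finset.mem_filter.mp h).1, h⟩⟩
  have hone : ∑ t ∈ Finset.powersetCard 3 (Finset.univ : Finset (Fin n)),
      ((if t ∈ cyclicTriangles n r then 1 else 0) + (srcSet r t).card) = n.choose 3 := by
    rw [Finset.sum_congr rfl (fun t ht => per_t hr t
      (Finset.mem_powersetCard.mp ht).2), Finset.sum_const, smul_eq_mul, mul_one,
      Finset.card_powersetCard, Finset.card_univ, Fintype.card_fin]
  rw [Finset.sum_add_distrib, hcyc, hsrc] at hone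
  exact hone

set_option maxHeartbeats 1000000 in
/-- Kendall–Smith: a tournament on `n` vertices has at most `(n³-n)/24` cyclic
triangles if `n` is odd, and at most `(n³-4n)/24` if `n` is even. -/
theorem stmt1 (n : ℕ) (r : Fin n → Fin n → Prop) (hr : IsTournament r) :
    (Odd n → 24 * (cyclicTriangles n r).card ≤ n ^ 3 - n) ∧
    (Even n → 24 * (cyclicTriangles n r).card ≤ n ^ 3 - 4 * n) := by
  set d := outdeg r with hd
  set c := (cyclicTriangles n r).card with hc
  have h1 := sum_outdeg r hr
  have hkey := key_identity r hr
  set N : ℤ := (n : ℤ) with hN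
  set Dz : ℤ := ∑ v : Fin n, (d v : ℤ) with hDz
  set Qz : ℤ := ∑ v : Fin n, ((d v : ℤ) * (d v : ℤ)) with hQz
  set Tz : ℤ := ∑ v : Fin n, ((d v).choose 2 : ℤ) with hTz
  set C3z : ℤ := (n.choose 3 : ℤ) with hC3z
  have hA : 2 * Dz + N = N * N := by
    rw [hDz, hN, ← Nat.cast_sum]
    exact_mod_cast h1
  have hB : 2 * Tz + Dz = Qz := by
    have hnat2 : 2 * (∑ v : Fin n, (d v).choose 2) + ∑ v : Fin n, d v
        = ∑ v : Fin n, d v * d v := by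
      rw [Finset.mul_sum, ← Finset.sum_add_distrib]
      exact Finset.sum_congr rfl fun v _ => two_mul_choose_two (d v)
    rw [hTz, hDz, hQz]
    exact_mod_cast hnat2
  have hC : (c : ℤ) + Tz = C3z := by
    rw [hTz, hC3z, ← Nat.cast_sum]
    exact_mod_cast hkey
  have hD : 6 * C3z + 3 * N ^ 2 = N ^ 3 + 2 * N := by
    rw [hC3z, hN]
    exact_mod_cast six_mul_choose_three n
  have hexp : ∑ v : Fin n, (2 * (d v : ℤ) - (N - 1)) ^ 2
      = 4 * Qz - 4 * (N - 1) * Dz + N * (N - 1) ^ 2 := by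
    have hterm : ∀ v : Fin n, (2 * (d v : ℤ) - (N - 1)) ^ 2
        = 4 * ((d v : ℤ) * (d v : ℤ)) - 4 * (N - 1) * (d v : ℤ) + (N - 1) ^ 2 :=
      fun v => by ring
    rw [Finset.sum_congr rfl fun v _ => hterm v, Finset.sum_add_distrib,
      Finset.sum_sub_distrib, ← Finset.mul_sum, ← Finset.mul_sum, Finset.sum_const,
      Finset.card_univ, Fintype.card_fin, nsmul_eq_mul, ← hQz, ← hDz, ← hN]
  have hA3 : 4 * (N - 1) * Dz = 2 * (N - 1) * (N * N - N) := by
    linear_combination (2 * (N - 1)) * hA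
  constructor
  · intro _
    have hE : 0 ≤ 4 * Qz - 4 * (N - 1) * Dz + N * (N - 1) ^ 2 := by
      rw [← hexp]
      exact Finset.sum_nonneg fun v _ => sq_nonneg _
    have hQ : N * (N - 1) ^ 2 ≤ 4 * Qz := by nlinarith [hE, hA3]
    have hfin : (24 * c : ℤ) + N ≤ N ^ 3 := by nlinarith [hA, hB, hC, hD, hQ]
    rw [hN] at hfin
    have hnat : 24 * c + n ≤ n ^ 3 := by exact_mod_cast hfin
    exact le_tsub_of_add_le_right hnat
  · intro hev
    obtain ⟨m, rfl⟩ := hev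
    have hE : (N : ℤ) ≤ 4 * Qz - 4 * (N - 1) * Dz + N * (N - 1) ^ 2 := by
      rw [← hexp]
      have hb : ∀ v : Fin (m + m), (1 : ℤ) ≤ (2 * (d v : ℤ) - (N - 1)) ^ 2 := by
        intro v
        have hodd : Odd (2 * (d v : ℤ) - (N - 1)) := by
          refine ⟨(d v : ℤ) - m, ?_⟩
          rw [hN]
          push_cast
          ring
        obtain ⟨k, hk⟩ := hodd
        rw [hk]
        rcases le_or_gt 0 k with h | h <;> nlinarith [h]
      have hcard := Finset.card_nsmul_le_sum (Finset.univ : Finset (Fin (m + m)))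
        (fun v => (2 * (d v : ℤ) - (N - 1)) ^ 2) 1 (fun v _ => hb v)
      simpa [hN] using hcard
    have hQ : N * (N - 1) ^ 2 + N ≤ 4 * Qz := by nlinarith [hE, hA3]
    have hfin : (24 * c : ℤ) + 4 * N ≤ N ^ 3 := by nlinarith [hA, hB, hC, hD, hQ]
    rw [hN] at hfin
    have hnat : 24 * c + 4 * (m + m) ≤ (m + m) ^ 3 := by exact_mod_cast hfin
    exact le_tsub_of_add_le_right hnat
end

section
/- For every ε₁, ε₂ > 0, setting δ = ε₁ε₂²/2, the following holds: for every tournament T on n vertices with more than (1/24 - δ)n³ cyclic triangles, the set of vertices v with both d⁺(v) and d⁻(v) strictly between (n-1)/2 - ε₂n and (n-1)/2 + ε₂n has size greater than (1-ε₁)n. -/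
open scoped Classical

lemma cast_choose_three (n : ℕ) :
    ((n.choose 3 : ℕ) : ℝ) = n * ((n:ℝ) - 1) * ((n:ℝ) - 2) / 6 := by
  induction n with
  | zero => norm_num
  | succ k ih =>
    rw [Nat.choose_succ_succ]
    push_cast
    rw [ih, Nat.cast_choose_two]
    ring

lemma count_aux (n : ℕ) (r : Fin n → Fin n → Prop) (hr : IsTournament r) :
    (cyclicTriangles n r).card
      + ∑ v : Fin n, ((Finset.univ.filter (fun u => r v u)).card).choose 2
      ≤ n.choose 3 := by
  classical
  have hasym : ∀ u v, r u v → ¬ r v u := by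
    intro u v huv hvu
    by_cases h : u = v
    · exact hr.1 u (h ▸ huv)
    · exact (hr.2 u v h).mp huv hvu
  have hne : ∀ u v : Fin n, r u v → u ≠ v := by
    intro u v huv h; exact hr.1 v (h ▸ huv)
  set P := Finset.powersetCard 3 (Finset.univ : Finset (Fin n)) with hP
  set pred := fun s : Finset (Fin n) =>
      ∃ u v w, u ∈ s ∧ v ∈ s ∧ w ∈ s ∧ r u v ∧ r v w ∧ r w u with hpred
  have hsplit : (P.filter pred).card + (P.filter (fun s => ¬ pred s)).card = P.card :=
    Finset.card_filter_add_card_filter_not _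
  have hPcard : P.card = n.choose 3 := by
    simp [hP, Finset.card_powersetCard]
  have hsig : ∑ v : Fin n, ((Finset.univ.filter (fun u => r v u)).card).choose 2
      = (Finset.univ.sigma
          (fun v : Fin n => (Finset.univ.filter (fun u => r v u)).powersetCard 2)).card := by
    rw [Finset.card_sigma]
    simp [Finset.card_powersetCard]
  have hinj : (Finset.univ.sigma
        (fun v : Fin n => (Finset.univ.filter (fun u => r v u)).powersetCard 2)).card
      ≤ (P.filter (fun s => ¬ pred s)).card := by
    apply Finset.card_le_card_of_injOn (fun p => insert p.1 p.2)
    · rintro ⟨v, s⟩ hp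
      simp only [Finset.mem_coe, Finset.mem_sigma, Finset.mem_powersetCard] at hp
      obtain ⟨-, hs, hcard⟩ := hp
      have hrs : ∀ u ∈ s, r v u := by
        intro u hu
        have := hs hu
        simpa using this
      have hvs : v ∉ s := fun hv => hr.1 v (hrs v hv)
      rw [Finset.mem_coe, Finset.mem_filter, hP, Finset.mem_powersetCard]
      refine ⟨⟨Finset.subset_univ _, by
        rw [Finset.card_insert_of_notMem hvs, hcard]⟩, ?_⟩
      rintro ⟨a, b, c, ha, hb, hc, hab, hbc, hca⟩
      rcases Finset.mem_insert.mp ha with rfl | ha'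
      · rcases Finset.mem_insert.mp hc with rfl | hc'
        · exact hr.1 _ hca
        · exact hasym _ _ (hrs c hc') hca
      · rcases Finset.mem_insert.mp hb with rfl | hb'
        · exact hasym _ _ (hrs a ha') hab
        · rcases Finset.mem_insert.mp hc with rfl | hc'
          · exact hasym _ _ (hrs b hb') hbc
          · have h1 : a ≠ b := hne _ _ hab
            have h2 : b ≠ c := hne _ _ hbc
            have h3 : c ≠ a := hne _ _ hca
            have hsub : ({a, b, c} : Finset (Fin n)) ⊆ s := by
              intro x hx
              simp only [Finset.mem_insert, Finset.mem_singleton] at hx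
              rcases hx with rfl | rfl | rfl <;> assumption
            have hle := Finset.card_le_card hsub
            rw [Finset.card_insert_of_notMem (by simp [h1, h3.symm]),
                Finset.card_insert_of_notMem (by simp [h2]),
                Finset.card_singleton, hcard] at hle
            omega
    · rintro ⟨v, s⟩ hp ⟨v', s'⟩ hp' heq
      simp only [Finset.coe_sigma, Set.mem_sigma_iff, Finset.mem_coe,
        Finset.mem_sigma, Finset.mem_powersetCard] at hp hp'
      simp only at heq
      have hrs : ∀ u ∈ s, r v u := by
        intro u hu; have := hp.2.1 hu; simpa using this
      have hrs' : ∀ u ∈ s', r v' u := by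
        intro u hu; have := hp'.2.1 hu; simpa using this
      have hvs : v ∉ s := fun hv => hr.1 v (hrs v hv)
      have hvs' : v' ∉ s' := fun hv => hr.1 v' (hrs' v' hv)
      have hvv : v = v' := by
        by_contra hne'
        have h1 : v ∈ insert v' s' := by rw [← heq]; exact Finset.mem_insert_self v s
        have h2 : v' ∈ insert v s := by rw [heq]; exact Finset.mem_insert_self v' s'
        rw [Finset.mem_insert] at h1 h2
        rcases h1 with h | h
        · exact hne' h
        rcases h2 with h' | h'
        · exact hne' h'.symm
        exact hasym _ _ (hrs _ h') (hrs' _ h)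
      subst hvv
      have hss : s = s' := by
        have h := congrArg (fun t => Finset.erase t v) heq
        simpa [Finset.erase_insert hvs, Finset.erase_insert hvs'] using h
      simp [hss]
  have hC : (cyclicTriangles n r).card = (P.filter pred).card := rfl
  rw [hC, hsig]
  omega

set_option maxHeartbeats 1000000 in
/-- Lemma 3.6: with `δ = ε₁ε₂²/2`, every `n`-vertex tournament with more than
`(1/24 - δ)n³` cyclic triangles has more than `(1-ε₁)n` vertices whose out- and
in-degrees both lie strictly between `(n-1)/2 - ε₂n` and `(n-1)/2 + ε₂n`. -/
theorem stmt4 (ε₁ ε₂ : ℝ) (h1 : 0 < ε₁) (h2 : 0 < ε₂) (n : ℕ)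
    (r : Fin n → Fin n → Prop) (hr : IsTournament r)
    (ht : ((1 : ℝ) / 24 - ε₁ * ε₂ ^ 2 / 2) * n ^ 3 < ((cyclicTriangles n r).card : ℝ)) :
    (1 - ε₁) * n <
      ((Finset.univ.filter (fun v : Fin n =>
        ((n : ℝ) - 1) / 2 - ε₂ * n < ((Finset.univ.filter (fun u => r v u)).card : ℝ) ∧
        ((Finset.univ.filter (fun u => r v u)).card : ℝ) < ((n : ℝ) - 1) / 2 + ε₂ * n ∧
        ((n : ℝ) - 1) / 2 - ε₂ * n < ((Finset.univ.filter (fun u => r u v)).card : ℝ) ∧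
        ((Finset.univ.filter (fun u => r u v)).card : ℝ) < ((n : ℝ) - 1) / 2 + ε₂ * n)).card : ℝ) := by
  classical
  have hasym : ∀ u v, r u v → ¬ r v u := by
    intro u v huv hvu
    by_cases h : u = v
    · exact hr.1 u (h ▸ huv)
    · exact (hr.2 u v h).mp huv hvu
  have hne : ∀ u v : Fin n, r u v → u ≠ v := by
    intro u v huv h; exact hr.1 v (h ▸ huv)
  have htot : ∀ u v : Fin n, u ≠ v → r u v ∨ r v u := by
    intro u v h
    by_cases huv : r u v
    · exact Or.inl huv
    · exact Or.inr ((hr.2 v u (Ne.symm h)).mpr huv)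
  rcases Nat.eq_zero_or_pos n with h0 | hn
  · subst h0
    have : (cyclicTriangles 0 r).card = 0 := by
      simp [cyclicTriangles]
    rw [this] at ht
    norm_num at ht
  have hn1 : 1 ≤ n := hn
  have hnR : (1:ℝ) ≤ (n:ℝ) := by exact_mod_cast hn1
  have hnR0 : (0:ℝ) < (n:ℝ) := by linarith
  -- abbreviate the predicate
  set Pr : Fin n → Prop := fun v : Fin n =>
        ((n : ℝ) - 1) / 2 - ε₂ * n < ((Finset.univ.filter (fun u => r v u)).card : ℝ) ∧
        ((Finset.univ.filter (fun u => r v u)).card : ℝ) < ((n : ℝ) - 1) / 2 + ε₂ * n ∧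
        ((n : ℝ) - 1) / 2 - ε₂ * n < ((Finset.univ.filter (fun u => r u v)).card : ℝ) ∧
        ((Finset.univ.filter (fun u => r u v)).card : ℝ) < ((n : ℝ) - 1) / 2 + ε₂ * n
    with hPr
  have hsplitc : (Finset.univ.filter Pr).card
      + (Finset.univ.filter (fun v => ¬ Pr v)).card = n := by
    rw [Finset.card_filter_add_card_filter_not, Finset.card_univ, Fintype.card_fin]
  set B := Finset.univ.filter (fun v => ¬ Pr v) with hB
  -- degree facts
  have hdd : ∀ v : Fin n, (Finset.univ.filter (fun u => r v u)).card
      + (Finset.univ.filter (fun u => r u v)).card = n - 1 := by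
    intro v
    have hdisj : Disjoint (Finset.univ.filter (fun u => r v u))
        (Finset.univ.filter (fun u => r u v)) := by
      rw [Finset.disjoint_left]
      intro u hu1 hu2
      simp only [Finset.mem_filter, Finset.mem_univ, true_and] at hu1 hu2
      exact hasym _ _ hu1 hu2
    have hun : (Finset.univ.filter (fun u => r v u))
        ∪ (Finset.univ.filter (fun u => r u v)) = Finset.univ.erase v := by
      ext u
      simp only [Finset.mem_union, Finset.mem_filter, Finset.mem_univ, true_and,
        Finset.mem_erase, and_true]
      constructor
      · rintro (h | h)
        · exact (hne v u h).symm
        · exact hne u v h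
      · intro h
        rcases htot v u (Ne.symm h) with h' | h'
        · exact Or.inl h'
        · exact Or.inr h'
    rw [← Finset.card_union_of_disjoint hdisj, hun,
      Finset.card_erase_of_mem (Finset.mem_univ v), Finset.card_univ, Fintype.card_fin]
  have hswap : ∑ v : Fin n, (Finset.univ.filter (fun u => r v u)).card
      = ∑ v : Fin n, (Finset.univ.filter (fun u => r u v)).card := by
    simp only [Finset.card_filter]
    exact Finset.sum_comm
  have h2sum : 2 * ∑ v : Fin n, (Finset.univ.filter (fun u => r v u)).card = n * (n - 1) := by
    have hsc : ∑ v : Fin n, ((Finset.univ.filter (fun u => r v u)).card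
        + (Finset.univ.filter (fun u => r u v)).card) = ∑ _v : Fin n, (n - 1) :=
      Finset.sum_congr rfl (fun v _ => hdd v)
    rw [Finset.sum_add_distrib, ← hswap, Finset.sum_const, Finset.card_univ,
      Fintype.card_fin, smul_eq_mul] at hsc
    omega
  have hsumR : ∑ v : Fin n, ((Finset.univ.filter (fun u => r v u)).card : ℝ)
      = (n:ℝ) * ((n:ℝ) - 1) / 2 := by
    have h := congrArg (fun k : ℕ => (k : ℝ)) h2sum
    push_cast [Nat.cast_sub hn1] at h
    linarith
  have hdinR : ∀ v : Fin n, ((Finset.univ.filter (fun u => r u v)).card : ℝ)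
      = (n:ℝ) - 1 - ((Finset.univ.filter (fun u => r v u)).card : ℝ) := by
    intro v
    have h := congrArg (fun k : ℕ => (k : ℝ)) (hdd v)
    push_cast [Nat.cast_sub hn1] at h
    linarith
  set S : ℝ := ∑ v : Fin n,
      (((Finset.univ.filter (fun u => r v u)).card : ℝ) - ((n:ℝ)-1)/2)^2 with hS
  -- counting bound
  have hcast : ((cyclicTriangles n r).card : ℝ)
      + ∑ v : Fin n, (((Finset.univ.filter (fun u => r v u)).card).choose 2 : ℝ)
      ≤ ((n.choose 3 : ℕ) : ℝ) := by
    exact_mod_cast count_aux n r hr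
  have hch2 : ∑ v : Fin n, (((Finset.univ.filter (fun u => r v u)).card).choose 2 : ℝ)
      = S/2 + (n:ℝ)*((n:ℝ)-1)*((n:ℝ)-2)/4 - (n:ℝ)*((n:ℝ)-1)^2/8 := by
    have h1 : ∑ v : Fin n, (((Finset.univ.filter (fun u => r v u)).card).choose 2 : ℝ)
        = ∑ v : Fin n,
          ((((Finset.univ.filter (fun u => r v u)).card : ℝ) - ((n:ℝ)-1)/2)^2 / 2
            + (((n:ℝ)-2)/2) * ((Finset.univ.filter (fun u => r v u)).card : ℝ)
            - ((n:ℝ)-1)^2/8) := by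
      refine Finset.sum_congr rfl (fun v _ => ?_)
      rw [Nat.cast_choose_two]
      ring
    rw [h1, Finset.sum_sub_distrib, Finset.sum_add_distrib, ← Finset.sum_div,
      ← Finset.mul_sum, Finset.sum_const, Finset.card_univ, Fintype.card_fin,
      nsmul_eq_mul, hsumR, ← hS]
    ring
  have hC3 : ((n.choose 3 : ℕ) : ℝ) = (n:ℝ) * ((n:ℝ) - 1) * ((n:ℝ) - 2) / 6 :=
    cast_choose_three n
  have hmain : ((cyclicTriangles n r).card : ℝ) ≤ (n:ℝ)^3/24 - S/2 := by
    rw [hch2, hC3] at hcast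
    nlinarith [hnR0]
  have hSlt : S < ε₁ * ε₂^2 * (n:ℝ)^3 := by nlinarith [ht, hmain]
  -- bad vertices have large deviation
  have hbadkey : ∀ v ∈ B, ε₂^2 * (n:ℝ)^2
      ≤ (((Finset.univ.filter (fun u => r v u)).card : ℝ) - ((n:ℝ)-1)/2)^2 := by
    intro v hv
    rw [hB, Finset.mem_filter] at hv
    by_contra hlt
    push_neg at hlt
    apply hv.2
    have hd' := hdinR v
    have hε : 0 < ε₂ * (n:ℝ) := by positivity
    have hlt' : (((Finset.univ.filter (fun u => r v u)).card : ℝ) - ((n:ℝ)-1)/2)^2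
        < (ε₂ * (n:ℝ))^2 := by nlinarith [hlt]
    have habs := abs_lt.mp (abs_lt_of_sq_lt_sq hlt' hε.le)
    refine ⟨by linarith [habs.1], by linarith [habs.2], ?_, ?_⟩
    · rw [hd']; linarith [habs.2]
    · rw [hd']; linarith [habs.1]
  have hSB : (B.card : ℝ) * (ε₂^2 * (n:ℝ)^2) ≤ S := by
    have h1 : B.card • (ε₂^2 * (n:ℝ)^2)
        ≤ ∑ v ∈ B, (((Finset.univ.filter (fun u => r v u)).card : ℝ) - ((n:ℝ)-1)/2)^2 :=
      Finset.card_nsmul_le_sum B _ _ hbadkey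
    rw [nsmul_eq_mul] at h1
    refine h1.trans ?_
    rw [hS]
    exact Finset.sum_le_sum_of_subset_of_nonneg (Finset.subset_univ B)
      (fun v _ _ => sq_nonneg _)
  have hε2n : (0:ℝ) < ε₂^2 * (n:ℝ)^2 := by positivity
  have hBcard : (B.card : ℝ) < ε₁ * n := by nlinarith [hSB, hSlt, hε2n]
  have hgood : ((Finset.univ.filter Pr).card : ℝ) = (n:ℝ) - (B.card : ℝ) := by
    have h := congrArg (fun k : ℕ => (k : ℝ)) hsplitc
    push_cast at h
    linarith
  rw [hgood]
  linarith
end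

section
/- If a 3-uniform hypergraph H contains a bottle (a pseudo-path of the form v₁v₂...v_k v₂ v₁ with k ≥ 4), then H is not orientable. -/
def Orientable {V : Type*} [DecidableEq V] (H : Set (Finset V)) : Prop :=
  ∃ r : V → V → Prop, IsTournament r ∧
    ∀ e ∈ H, ∃ u v w : V, e = {u, v, w} ∧ r u v ∧ r v w ∧ r w u

/-- `H` contains a bottle `v₀v₁…v_{k-1}v₁v₀` with `k ≥ 4` (repetitions allowed,
as it is a pseudo-path): hyperedges `{vᵢ,vᵢ₊₁,vᵢ₊₂}` for `0 ≤ i ≤ k-3` together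
with `{v_{k-2},v_{k-1},v₁}` and `{v_{k-1},v₁,v₀}`. -/
def HasBottle {V : Type*} [DecidableEq V] (H : Set (Finset V)) (k : ℕ) : Prop :=
  4 ≤ k ∧ ∃ v : ℕ → V,
    (∀ i, i + 2 < k → ({v i, v (i + 1), v (i + 2)} : Finset V) ∈ H) ∧
    ({v (k - 2), v (k - 1), v 1} : Finset V) ∈ H ∧
    ({v (k - 1), v 1, v 0} : Finset V) ∈ H

lemma pair_le {V : Type*} [DecidableEq V] (x y : V) :
    ({x, y} : Finset V).card ≤ 2 :=
  (Finset.card_insert_le _ _).trans (by simp)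

lemma dist3 {V : Type*} [DecidableEq V] {a b c : V}
    (h : ({a, b, c} : Finset V).card = 3) : a ≠ b ∧ a ≠ c ∧ b ≠ c := by
  refine ⟨?_, ?_, ?_⟩ <;> rintro rfl <;> simp at h <;>
    exact Nat.ne_of_lt (Nat.lt_succ_of_le (pair_le _ _)) h

lemma cyc3 {V : Type*} [DecidableEq V] {r : V → V → Prop} (hT : IsTournament r)
    {a b c u v w : V} (h : ({a, b, c} : Finset V) = {u, v, w})
    (hab : a ≠ b) (hac : a ≠ c) (hbc : b ≠ c)
    (h1 : r u v) (h2 : r v w) (h3 : r w u) (hrab : r a b) : r b c ∧ r c a := by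
  have huv : u ≠ v := by rintro rfl; exact hT.1 _ h1
  have hvw : v ≠ w := by rintro rfl; exact hT.1 _ h2
  have hwu : w ≠ u := by rintro rfl; exact hT.1 _ h3
  have nvu : ¬ r v u := (hT.2 u v huv).mp h1
  have nwv : ¬ r w v := (hT.2 v w hvw).mp h2
  have nuw : ¬ r u w := (hT.2 w u hwu).mp h3
  have ha : a ∈ ({u, v, w} : Finset V) := h ▸ (by simp)
  have hb : b ∈ ({u, v, w} : Finset V) := h ▸ (by simp)
  have hc : c ∈ ({u, v, w} : Finset V) := h ▸ (by simp)
  simp only [Finset.mem_insert, Finset.mem_singleton] at ha hb hc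
  rcases ha with rfl | rfl | rfl <;> rcases hb with rfl | rfl | rfl <;>
    rcases hc with rfl | rfl | rfl <;> tauto

lemma chainFalse {V : Type*} [DecidableEq V] (H : Set (Finset V))
    (hH : ∀ e ∈ H, e.card = 3) (k : ℕ) (hk : 4 ≤ k) (v : ℕ → V)
    (h1 : ∀ i, i + 2 < k → ({v i, v (i + 1), v (i + 2)} : Finset V) ∈ H)
    (h2 : ({v (k - 2), v (k - 1), v 1} : Finset V) ∈ H)
    (h3 : ({v (k - 1), v 1, v 0} : Finset V) ∈ H)
    (r : V → V → Prop) (hT : IsTournament r)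
    (hor : ∀ e ∈ H, ∃ u v w : V, e = {u, v, w} ∧ r u v ∧ r v w ∧ r w u)
    (h01 : r (v 0) (v 1)) : False := by
  have step : ∀ a b c : V, ({a, b, c} : Finset V) ∈ H → r a b → r b c ∧ r c a := by
    intro a b c hm hab
    obtain ⟨hab', hac', hbc'⟩ := dist3 (hH _ hm)
    obtain ⟨u, w, x, he, r1, r2, r3⟩ := hor _ hm
    exact cyc3 hT he hab' hac' hbc' r1 r2 r3 hab
  have fwd : ∀ i, i + 2 ≤ k → r (v i) (v (i + 1)) := by
    intro i
    induction i with
    | zero => exact fun _ => h01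
    | succ n ih =>
      intro hn
      exact (step _ _ _ (h1 n (by omega)) (ih (by omega))).1
  have hk2 : r (v (k - 2)) (v (k - 1)) := by
    have := fwd (k - 2) (by omega)
    have e : k - 2 + 1 = k - 1 := by omega
    rwa [e] at this
  have e1 := (step _ _ _ h2 hk2).1
  have e2 := (step _ _ _ h3 e1).1
  obtain ⟨_, _, h10⟩ := dist3 (hH _ h3)
  exact (hT.2 _ _ h10).mp e2 h01

/-- If a 3-uniform hypergraph contains a bottle then it is not orientable. -/
theorem stmt6 {V : Type*} [DecidableEq V] (H : Set (Finset V))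
    (hH : ∀ e ∈ H, e.card = 3) (k : ℕ) (hb : HasBottle H k) :
    ¬ Orientable H := by
  rintro ⟨r, hT, hor⟩
  obtain ⟨hk, v, h1, h2, h3⟩ := hb
  obtain ⟨_, _, h10⟩ := dist3 (hH _ h3)
  by_cases h01 : r (v 0) (v 1)
  · exact chainFalse H hH k hk v h1 h2 h3 r hT hor h01
  · have hT' : IsTournament (fun x y => r y x) := by
      refine ⟨hT.1, fun a b hab => ?_⟩
      have := hT.2 b a hab.symm
      tauto
    have hor' : ∀ e ∈ H, ∃ u w x : V, e = {u, w, x} ∧ r w u ∧ r x w ∧ r u x := by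
      intro e he
      obtain ⟨u, w, x, heq, r1, r2, r3⟩ := hor e he
      refine ⟨x, w, u, ?_, r2, r1, r3⟩
      rw [heq]; ext y; simp; tauto
    have h10' : r (v 1) (v 0) := by
      have := hT.2 (v 0) (v 1) (by exact fun h => h10 h.symm)
      tauto
    exact chainFalse H hH k hk v h1 h2 h3 (fun x y => r y x) hT' hor' h10'
end

section
/- Let L ≥ 4. If a 3-uniform hypergraph H contains no pseudo-cycle minus one hyperedge of size ℓ for every 4 ≤ ℓ ≤ L with 3 ∤ ℓ, then H contains no bottle of size at most L + 2. -/
/-- `H` contains a pseudo-cycle minus one hyperedge of size `ℓ`: a vertex sequence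
`v₀v₁…v_{ℓ-1}` (repetitions allowed) with `{vᵢ, v_{i+1 mod ℓ}, v_{i+2 mod ℓ}} ∈ H`
for all `0 ≤ i ≤ ℓ-2`. -/
def HasPseudoCycleMinus {V : Type*} [DecidableEq V] (H : Set (Finset V)) (ℓ : ℕ) : Prop :=
  ∃ v : ℕ → V, ∀ i, i + 2 ≤ ℓ →
    ({v i, v ((i + 1) % ℓ), v ((i + 2) % ℓ)} : Finset V) ∈ H

lemma triple_perm_mem {V : Type*} [DecidableEq V] {H : Set (Finset V)} {x y z : V} (a b c : V)
    (h : ({x, y, z} : Finset V) ∈ H)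
    (hx : a = x ∨ a = y ∨ a = z) (hy : b = x ∨ b = y ∨ b = z) (hz : c = x ∨ c = y ∨ c = z)
    (hx' : x = a ∨ x = b ∨ x = c) (hy' : y = a ∨ y = b ∨ y = c)
    (hz' : z = a ∨ z = b ∨ z = c) :
    ({a, b, c} : Finset V) ∈ H := by
  have : ({a, b, c} : Finset V) = {x, y, z} := by
    ext t
    simp only [Finset.mem_insert, Finset.mem_singleton]
    constructor
    · rintro (rfl | rfl | rfl) <;> tauto
    · rintro (rfl | rfl | rfl) <;> tauto
  rwa [this]

/-- Lemma 3.5 (first part): if a 3-graph contains no pseudo-cycle minus one hyperedge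
of size `ℓ` for every `4 ≤ ℓ ≤ L` with `3 ∤ ℓ`, then it contains no bottle of size
at most `L + 2`. -/
theorem stmt7 {V : Type*} [DecidableEq V] (H : Set (Finset V))
    (hH : ∀ e ∈ H, e.card = 3) (L : ℕ) (hL : 4 ≤ L)
    (h : ∀ ℓ, 4 ≤ ℓ → ℓ ≤ L → ¬ 3 ∣ ℓ → ¬ HasPseudoCycleMinus H ℓ) :
    ∀ k, k + 2 ≤ L + 2 → ¬ HasBottle H k := by
  rintro k hk ⟨hk4, v, hp, h1, h2⟩
  have hkL : k ≤ L := by omega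
  by_cases h3 : 3 ∣ k
  · -- use ℓ = k - 1, witness w j = v (j+1)
    obtain ⟨m, hm⟩ := h3
    have hk6 : 6 ≤ k := by omega
    refine h (k - 1) (by omega) (by omega) (by omega) ⟨fun j => v (j + 1), ?_⟩
    intro i hi
    simp only
    rcases eq_or_lt_of_le hi with heq | hlt
    · -- wrap case: i + 2 = k - 1
      have e1 : (i + 1) % (k - 1) = i + 1 := Nat.mod_eq_of_lt (by omega)
      have e2 : (i + 2) % (k - 1) = 0 := by
        have : i + 2 = k - 1 := heq
        rw [this, Nat.mod_self]
      rw [e1, e2]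
      have eb : i + 1 + 1 = k - 1 := by omega
      have ea : i + 1 = k - 2 := by omega
      rw [eb, ea]
      exact h1
    · have e1 : (i + 1) % (k - 1) = i + 1 := Nat.mod_eq_of_lt (by omega)
      have e2 : (i + 2) % (k - 1) = i + 2 := Nat.mod_eq_of_lt (by omega)
      rw [e1, e2]
      have := hp (i + 1) (by omega)
      have ea : i + 1 + 1 = i + 2 := by omega
      have eb : i + 1 + 2 = i + 2 + 1 := by omega
      rw [ea, eb] at this
      exact this
  · -- use ℓ = k, witness w = v2, v0, v1, v(k-1), v(k-2), ..., v3
    refine h k (by omega) hkL h3 ⟨fun j => if j = 0 then v 2 else if j = 1 then v 0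
      else if j = 2 then v 1 else v (k + 2 - j), ?_⟩
    intro i hi
    simp only
    by_cases hw : i + 2 = k
    · -- wrap case: i = k - 2
      have e1 : (i + 1) % k = i + 1 := Nat.mod_eq_of_lt (by omega)
      have e2 : (i + 2) % k = 0 := by rw [hw, Nat.mod_self]
      rw [e1, e2]
      by_cases hk5 : k = 4
      · -- i = 2 : {v 1, v 3, v 2}
        have hi2 : i = 2 := by omega
        subst hi2
        norm_num
        have := hp 1 (by omega)
        exact triple_perm_mem _ _ _ this (by tauto) (by right; right; rw [show k + 2 - 3 = 3 by omega]) (by tauto) (by tauto) (by tauto) (by right; left; rw [show k + 2 - 3 = 3 by omega])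
      · -- k ≥ 5, i = k - 2 ≥ 3 : {v 4, v 3, v 2}
        have hi0 : i ≠ 0 := by omega
        have hi1 : i ≠ 1 := by omega
        have hi2 : i ≠ 2 := by omega
        have hj1 : i + 1 ≠ 0 := by omega
        have hj2 : i + 1 ≠ 1 := by omega
        have hj3 : i + 1 ≠ 2 := by omega
        simp only [hi0, hi1, hi2, hj1, hj2, hj3, if_false, if_pos rfl]
        have ea : k + 2 - i = 4 := by omega
        have eb : k + 2 - (i + 1) = 3 := by omega
        rw [ea, eb]
        have := hp 2 (by omega)
        exact triple_perm_mem _ _ _ this (by tauto) (by tauto) (by tauto) (by tauto) (by tauto) (by tauto)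
    · have hlt : i + 2 < k := by omega
      have e1 : (i + 1) % k = i + 1 := Nat.mod_eq_of_lt (by omega)
      have e2 : (i + 2) % k = i + 2 := Nat.mod_eq_of_lt (by omega)
      rw [e1, e2]
      rcases Nat.lt_or_ge i 3 with hi3 | hi3
      · interval_cases i
        · -- {v 2, v 0, v 1}
          norm_num
          have := hp 0 (by omega)
          exact triple_perm_mem _ _ _ this (by tauto) (by tauto) (by tauto) (by tauto) (by tauto) (by tauto)
        · -- {v 0, v 1, v (k-1)}
          norm_num
          rw [show k + 2 - 3 = k - 1 by omega]
          exact triple_perm_mem _ _ _ h2 (by tauto) (by tauto) (by tauto) (by tauto) (by tauto) (by tauto)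
        · -- {v 1, v (k-1), v (k-2)}
          norm_num
          rw [show k + 2 - 3 = k - 1 by omega, show k + 2 - 4 = k - 2 by omega]
          exact triple_perm_mem _ _ _ h1 (by tauto) (by tauto) (by tauto) (by tauto) (by tauto) (by tauto)
      · -- i ≥ 3 : {v (k+2-i), v (k+1-i), v (k-i)}
        have hi0 : i ≠ 0 := by omega
        have hi1 : i ≠ 1 := by omega
        have hi2 : i ≠ 2 := by omega
        have hj1 : i + 1 ≠ 0 := by omega
        have hj2 : i + 1 ≠ 1 := by omega
        have hj3 : i + 1 ≠ 2 := by omega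
        have hl1 : i + 2 ≠ 0 := by omega
        have hl2 : i + 2 ≠ 1 := by omega
        have hl3 : i + 2 ≠ 2 := by omega
        simp only [hi0, hi1, hi2, hj1, hj2, hj3, hl1, hl2, hl3, if_false]
        have := hp (k - i) (by omega)
        rw [show k - i + 2 = k + 2 - i by omega, show k - i + 1 = k + 2 - (i + 1) by omega,
          show k - i = k + 2 - (i + 2) by omega] at this
        exact triple_perm_mem _ _ _ this (by tauto) (by tauto) (by tauto) (by tauto) (by tauto) (by tauto)
end

section
/- If a 3-uniform hypergraph H contains no pseudo-cycle minus one hyperedge of size ℓ for any ℓ ≥ 4 with 3 ∤ ℓ, then H is orientable. -/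
namespace Stmt8Aux

variable {V : Type*} [DecidableEq V]

/-- One forcing step: orienting the pair `p` forces orienting the pair `q`
within a common hyperedge. -/
def Step (H : Set (Finset V)) (p q : V × V) : Prop :=
  p.2 = q.1 ∧ ({p.1, p.2, q.2} : Finset V) ∈ H

def Reach (H : Set (Finset V)) : V × V → V × V → Prop :=
  Relation.ReflTransGen (Step H)

lemma triple_eq {a b c d e f : V}
    (h : ∀ x : V, (x = a ∨ x = b ∨ x = c) ↔ (x = d ∨ x = e ∨ x = f)) :
    ({a, b, c} : Finset V) = {d, e, f} := by
  ext x
  simp only [Finset.mem_insert, Finset.mem_singleton]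
  exact h x

lemma step_single {H : Set (Finset V)} {a b c : V}
    (h : ({a, b, c} : Finset V) ∈ H) : Reach H (a, b) (b, c) :=
  Relation.ReflTransGen.single ⟨rfl, h⟩

lemma step_rev {H : Set (Finset V)} {p q : V × V} (h : Step H p q) : Reach H q p := by
  obtain ⟨a, b⟩ := p
  obtain ⟨c, d⟩ := q
  have h1 : b = c := h.1
  subst h1
  have h2 : ({a, b, d} : Finset V) ∈ H := h.2
  have e1 : ({b, d, a} : Finset V) ∈ H := by
    rw [show ({b, d, a} : Finset V) = {a, b, d} from triple_eq (fun x => by tauto)]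
    exact h2
  have e2 : ({d, a, b} : Finset V) ∈ H := by
    rw [show ({d, a, b} : Finset V) = {a, b, d} from triple_eq (fun x => by tauto)]
    exact h2
  exact (step_single e1).trans (step_single e2)

lemma reach_symm {H : Set (Finset V)} {p q : V × V} (h : Reach H p q) : Reach H q p := by
  induction h with
  | refl => exact Relation.ReflTransGen.refl
  | tail _ hstep ih => exact (step_rev hstep).trans ih

lemma reach_swap {H : Set (Finset V)} {p q : V × V} (h : Reach H p q) :
    Reach H (p.2, p.1) (q.2, q.1) := by
  induction h with
  | refl => exact Relation.ReflTransGen.refl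
  | @tail b c _ hstep ih =>
      obtain ⟨a, b'⟩ := b
      obtain ⟨c', d⟩ := c
      have h1 : b' = c' := hstep.1
      subst h1
      have h2 : ({a, b', d} : Finset V) ∈ H := hstep.2
      have e1 : ({b', a, d} : Finset V) ∈ H := by
        rw [show ({b', a, d} : Finset V) = {a, b', d} from triple_eq (fun x => by tauto)]
        exact h2
      have e2 : ({a, d, b'} : Finset V) ∈ H := by
        rw [show ({a, d, b'} : Finset V) = {a, b', d} from triple_eq (fun x => by tauto)]
        exact h2
      exact ih.trans ((step_single e1).trans (step_single e2))

/-- Equivalence: same class or swapped class. -/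
def SRel (H : Set (Finset V)) (p q : V × V) : Prop :=
  Reach H p q ∨ Reach H p (q.2, q.1)

lemma srel_equiv (H : Set (Finset V)) : Equivalence (SRel H) := by
  constructor
  · intro p; exact Or.inl Relation.ReflTransGen.refl
  · intro p q hpq
    rcases hpq with h | h
    · exact Or.inl (reach_symm h)
    · have := reach_swap (reach_symm h)
      exact Or.inr this
  · intro p q r h1 h2
    rcases h1 with h1 | h1 <;> rcases h2 with h2 | h2
    · exact Or.inl (h1.trans h2)
    · exact Or.inr (h1.trans h2)
    · exact Or.inr (h1.trans (reach_swap h2))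
    · exact Or.inl (h1.trans (reach_swap h2))

def pairSetoid (H : Set (Finset V)) : Setoid (V × V) :=
  ⟨SRel H, srel_equiv H⟩

noncomputable def rep (H : Set (Finset V)) (p : V × V) : V × V :=
  (Quotient.mk (pairSetoid H) p).out

lemma rep_rel (H : Set (Finset V)) (p : V × V) : SRel H (rep H p) p :=
  @Quotient.exact _ (pairSetoid H) _ _ (Quotient.out_eq _)

lemma rep_eq_of_rel {H : Set (Finset V)} {p q : V × V} (h : SRel H p q) :
    rep H p = rep H q := by
  unfold rep
  congr 1
  exact Quotient.sound h

lemma triple_card_ne1 {H : Set (Finset V)} (hH : ∀ e ∈ H, Finset.card e = 3) (x y : V) :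
    ({x, y, x} : Finset V) ∉ H := by
  intro hmem
  have h3 := hH _ hmem
  rw [show ({x, y, x} : Finset V) = {x, y} from by
    ext z; simp only [Finset.mem_insert, Finset.mem_singleton]; tauto] at h3
  have h2 : ({x, y} : Finset V).card ≤ 2 := by
    calc ({x, y} : Finset V).card ≤ ({y} : Finset V).card + 1 := Finset.card_insert_le _ _
      _ = 2 := by simp
  omega

lemma triple_card_ne2 {H : Set (Finset V)} (hH : ∀ e ∈ H, Finset.card e = 3) (x y : V) :
    ({x, y, y} : Finset V) ∉ H := by
  intro hmem
  have h3 := hH _ hmem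
  rw [show ({x, y, y} : Finset V) = {x, y} from by
    ext z; simp only [Finset.mem_insert, Finset.mem_singleton]; tauto] at h3
  have h2 : ({x, y} : Finset V).card ≤ 2 := by
    calc ({x, y} : Finset V).card ≤ ({y} : Finset V).card + 1 := Finset.card_insert_le _ _
      _ = 2 := by simp
  omega

lemma exists_walk {H : Set (Finset V)} {p q : V × V} (h : Reach H p q) :
    ∃ (n : ℕ) (w : ℕ → V), w 0 = p.1 ∧ w 1 = p.2 ∧ w n = q.1 ∧ w (n + 1) = q.2 ∧
      ∀ i < n, ({w i, w (i + 1), w (i + 2)} : Finset V) ∈ H := by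
  induction h with
  | refl =>
      refine ⟨0, fun i => if i = 0 then p.1 else p.2, by simp, by simp, by simp, by simp, ?_⟩
      intro i hi
      exact absurd hi (by omega)
  | @tail b c _ hstep ih =>
      obtain ⟨n, w, h0, h1, hn, hn1, hedge⟩ := ih
      have hq1 : b.2 = c.1 := hstep.1
      have hq2 : ({b.1, b.2, c.2} : Finset V) ∈ H := hstep.2
      refine ⟨n + 1, fun i => if i = n + 2 then c.2 else w i, ?_, ?_, ?_, ?_, ?_⟩
      · simpa [show (0 : ℕ) ≠ n + 2 from by omega] using h0
      · simpa [show (1 : ℕ) ≠ n + 2 from by omega] using h1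
      · simpa [show n + 1 ≠ n + 2 from by omega] using hn1.trans hq1
      · simp
      · intro i hi
        by_cases hin : i < n
        · have g1 : i ≠ n + 2 := by omega
          have g2 : i + 1 ≠ n + 2 := by omega
          have g3 : i + 2 ≠ n + 2 := by omega
          simpa [g1, g2, g3, show i ≠ n + 1 from by omega, show i ≠ n from by omega] using hedge i hin
        · have hieq : i = n := by omega
          subst hieq
          have g1 : i ≠ i + 2 := by omega
          have g2 : i + 1 ≠ i + 2 := by omega
          simpa [g1, g2, hn, hn1] using hq2

end Stmt8Aux

open Stmt8Aux in
/-- Lemma 3.5 (second part): a 3-graph containing no pseudo-cycle minus one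
hyperedge of size `ℓ` for any `ℓ ≥ 4` with `3 ∤ ℓ` is orientable. -/
theorem stmt8 {V : Type*} [DecidableEq V] (H : Set (Finset V))
    (hH : ∀ e ∈ H, e.card = 3)
    (h : ∀ ℓ, 4 ≤ ℓ → ¬ 3 ∣ ℓ → ¬ HasPseudoCycleMinus H ℓ) :
    Orientable H := by
  classical
  by_cases hcon : ∃ u v : V, u ≠ v ∧ Reach H (u, v) (v, u)
  · -- derive a contradiction with `h` by producing a pseudo-cycle
    exfalso
    obtain ⟨u, v, huv, hreach⟩ := hcon
    obtain ⟨n, w, h0, h1, hn, hn1, hedge⟩ := exists_walk hreach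
    have h0' : w 0 = u := h0
    have h1' : w 1 = v := h1
    have hn' : w n = v := hn
    have hn1' : w (n + 1) = u := hn1
    have hne0 : n ≠ 0 := by
      rintro rfl
      exact huv (h0'.symm.trans hn')
    have hne1 : n ≠ 1 := by
      rintro rfl
      have e0 := hedge 0 (by omega)
      rw [h0', hn1'] at e0
      exact triple_card_ne1 hH u (w 1) e0
    have hne2 : n ≠ 2 := by
      rintro rfl
      have e0 := hedge 0 (by omega)
      rw [h1', hn'] at e0
      exact triple_card_ne2 hH (w 0) v e0
    by_cases h3 : (n + 1) % 3 = 0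
    · -- use length n + 3
      refine h (n + 3) (by omega) (by omega) ⟨fun j => if j = 0 then w 2 else w (j - 1), ?_⟩
      intro i hi
      have l1 : (i + 1) % (n + 3) = i + 1 := Nat.mod_eq_of_lt (by omega)
      by_cases hc : i + 2 = n + 3
      · obtain rfl : i = n + 1 := by omega
        have l2 : (n + 1 + 2) % (n + 3) = 0 := by
          rw [show n + 1 + 2 = n + 3 from by omega, Nat.mod_self]
        rw [l1, l2]
        simp only [show n + 1 + 1 = n + 2 from by omega]
        have g1 : n + 1 ≠ 0 := by omega
        have g2 : n + 2 ≠ 0 := by omega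
        simp only [g1, g2, if_neg, if_pos, ite_true, ite_false, if_false, reduceIte]
        have e0 := hedge 0 (by omega)
        have r1 : w (n + 1 - 1) = w 1 := by
          rw [show n + 1 - 1 = n from by omega, hn', ← h1']
        have r2 : w (n + 2 - 1) = w 0 := by
          rw [show n + 2 - 1 = n + 1 from by omega, hn1', ← h0']
        rw [r1, r2]
        rw [show ({w 1, w 0, w 2} : Finset V) = {w 0, w 1, w 2} from
          triple_eq (fun x => by tauto)]
        exact e0
      · have l2 : (i + 2) % (n + 3) = i + 2 := Nat.mod_eq_of_lt (by omega)
        rw [l1, l2]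
        by_cases hi0 : i = 0
        · subst hi0
          simp only [ite_true, ite_false, reduceIte, show (1 : ℕ) ≠ 0 from by omega,
            show (2 : ℕ) ≠ 0 from by omega, if_neg, if_pos]
          have e0 := hedge 0 (by omega)
          rw [show ({w 2, w (1 - 1), w (2 - 1)} : Finset V) = {w 0, w 1, w 2} from
            triple_eq (fun x => by norm_num; tauto)]
          exact e0
        · have g1 : i + 1 ≠ 0 := by omega
          have g2 : i + 2 ≠ 0 := by omega
          simp only [hi0, g1, g2, if_neg, ite_false, if_false, reduceIte]
          have e := hedge (i - 1) (by omega)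
          rw [show i - 1 + 1 = i from by omega, show i - 1 + 2 = i + 1 from by omega] at e
          rw [show i + 1 - 1 = i from by omega, show i + 2 - 1 = i + 1 from by omega]
          exact e
    · -- use length n + 1
      refine h (n + 1) (by omega) (by omega) ⟨w, ?_⟩
      intro i hi
      have l1 : (i + 1) % (n + 1) = i + 1 := Nat.mod_eq_of_lt (by omega)
      rw [l1]
      by_cases hc : i + 2 = n + 1
      · rw [hc, Nat.mod_self]
        have he := hedge i (by omega)
        rw [show i + 2 = n + 1 from hc] at he
        rw [show w 0 = w (n + 1) from h0'.trans hn1'.symm]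
        exact he
      · have l2 : (i + 2) % (n + 1) = i + 2 := Nat.mod_eq_of_lt (by omega)
        rw [l2]
        exact hedge i (by omega)
  · -- build the orientation from representatives of forcing classes
    push_neg at hcon
    refine ⟨fun x y => x ≠ y ∧ Reach H (rep H (x, y)) (x, y), ⟨fun x hx => hx.1 rfl, ?_⟩, ?_⟩
    · intro x y hxy
      have hswap : SRel H (x, y) (y, x) := Or.inr Relation.ReflTransGen.refl
      have hrepeq : rep H (x, y) = rep H (y, x) := rep_eq_of_rel hswap
      have hro : Reach H (rep H (x, y)) (x, y) ∨ Reach H (rep H (x, y)) (y, x) :=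
        rep_rel H (x, y)
      have hnb : ¬ (Reach H (rep H (x, y)) (x, y) ∧ Reach H (rep H (x, y)) (y, x)) := by
        rintro ⟨ha, hb⟩
        exact hcon x y hxy ((reach_symm ha).trans hb)
      constructor
      · rintro ⟨-, hxy'⟩ ⟨-, hyx'⟩
        rw [← hrepeq] at hyx'
        exact hnb ⟨hxy', hyx'⟩
      · intro hnr
        refine ⟨hxy, ?_⟩
        rcases hro with hro | hro
        · exact hro
        · exact absurd ⟨Ne.symm hxy, hrepeq ▸ hro⟩ hnr
    · intro e he
      obtain ⟨a, b, c, hab, hac, hbc, rfl⟩ := Finset.card_eq_three.mp (hH e he)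
      have heH : ({a, b, c} : Finset V) ∈ H := he
      have m1 : ({b, c, a} : Finset V) ∈ H := by
        rw [show ({b, c, a} : Finset V) = {a, b, c} from triple_eq (fun x => by tauto)]
        exact heH
      have m2 : ({b, a, c} : Finset V) ∈ H := by
        rw [show ({b, a, c} : Finset V) = {a, b, c} from triple_eq (fun x => by tauto)]
        exact heH
      have m3 : ({a, c, b} : Finset V) ∈ H := by
        rw [show ({a, c, b} : Finset V) = {a, b, c} from triple_eq (fun x => by tauto)]
        exact heH
      have R1 : Reach H (a, b) (b, c) := step_single heH
      have R2 : Reach H (b, c) (c, a) := step_single m1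
      have R1' : Reach H (b, a) (a, c) := step_single m2
      have R2' : Reach H (a, c) (c, b) := step_single m3
      have q1 : rep H (a, b) = rep H (b, c) := rep_eq_of_rel (Or.inl R1)
      have q2 : rep H (b, c) = rep H (c, a) := rep_eq_of_rel (Or.inl R2)
      have q1' : rep H (a, b) = rep H (b, a) := rep_eq_of_rel (Or.inr Relation.ReflTransGen.refl)
      have q2'' : rep H (b, a) = rep H (a, c) := rep_eq_of_rel (Or.inl R1')
      have q3'' : rep H (a, c) = rep H (c, b) := rep_eq_of_rel (Or.inl R2')
      have hro : Reach H (rep H (a, b)) (a, b) ∨ Reach H (rep H (a, b)) (b, a) :=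
        rep_rel H (a, b)
      rcases hro with ho | ho
      · refine ⟨a, b, c, rfl, ⟨hab, ho⟩, ⟨hbc, ?_⟩, ⟨Ne.symm hac, ?_⟩⟩
        · rw [← q1]; exact ho.trans R1
        · rw [← q2, ← q1]; exact (ho.trans R1).trans R2
      · refine ⟨b, a, c, triple_eq (fun x => by tauto), ⟨Ne.symm hab, ?_⟩, ⟨hac, ?_⟩,
          ⟨Ne.symm hbc, ?_⟩⟩
        · rw [← q1']; exact ho
        · rw [← q2'', ← q1']; exact ho.trans R1'
        · rw [← q3'', ← q2'', ← q1']; exact (ho.trans R1').trans R2'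
end

section
/- Every triangle-free graph G with n vertices and m edges can be made bipartite by removing at most m - 4m²/n² edges. -/
/-- Erdős–Faudree–Pach–Spencer (weak form): every triangle-free graph `G` with
`n` vertices and `m` edges can be made bipartite by deleting at most
`m - 4m²/n²` edges. -/
theorem stmt11 {V : Type*} [Fintype V] [DecidableEq V] (G : SimpleGraph V)
    [DecidableRel G.Adj] (hG : G.CliqueFree 3) :
    ∃ s : Finset (Sym2 V), s ⊆ G.edgeFinset ∧
      ((s.card : ℝ) ≤ (G.edgeFinset.card : ℝ)
          - 4 * (G.edgeFinset.card : ℝ) ^ 2 / (Fintype.card V : ℝ) ^ 2) ∧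
      (G.deleteEdges ↑s).Colorable 2 := by
  classical
  by_cases hne : G.edgeFinset.Nonempty
  · -- main case
    obtain ⟨e₀, he₀⟩ := hne
    -- choose a vertex maximizing the sum of degrees over its neighborhood
    set f : V → ℕ := fun w => ∑ u ∈ G.neighborFinset w, G.degree u with hf
    have hVne : (Finset.univ : Finset V).Nonempty := ⟨e₀.out.1, Finset.mem_univ _⟩
    obtain ⟨v, -, hv⟩ := Finset.exists_max_image Finset.univ f hVne
    set A := G.neighborFinset v with hA
    -- A is an independent set
    have hind : ∀ a ∈ A, ∀ b ∈ A, ¬ G.Adj a b := by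
      intro a ha b hb hab
      rw [hA, SimpleGraph.mem_neighborFinset] at ha hb
      exact hG {v, a, b} (SimpleGraph.is3Clique_triple_iff.mpr ⟨ha, hb, hab⟩)
    set p : Sym2 V → Prop := fun e => ∀ x ∈ e, x ∉ A with hp
    set s := G.edgeFinset.filter p with hs
    refine ⟨s, Finset.filter_subset _ _, ?_, ?_⟩
    · -- cardinality bound
      set t := G.edgeFinset.filter (fun e => ¬ p e) with htdef
      have hst : s.card + t.card = G.edgeFinset.card :=
        Finset.card_filter_add_card_filter_not (p := p)
      -- t is the disjoint union of incidence sets of vertices of A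
      have htb : t = A.biUnion (fun a => G.incidenceFinset a) := by
        ext e
        simp only [htdef, hp, Finset.mem_filter, Finset.mem_biUnion,
          SimpleGraph.mem_incidenceFinset, SimpleGraph.incidenceSet,
          Set.mem_setOf_eq, SimpleGraph.mem_edgeFinset, not_forall, not_not,
          Set.mem_sep_iff, SimpleGraph.mem_edgeSet]
        constructor
        · rintro ⟨he, x, hx, hxA⟩
          exact ⟨x, hxA, by simpa [SimpleGraph.mem_edgeSet] using he, hx⟩
        · rintro ⟨a, haA, he, hae⟩
          exact ⟨by simpa [SimpleGraph.mem_edgeSet] using he, a, hae, haA⟩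
      have htcard : t.card = f v := by
        rw [htb, Finset.card_biUnion, hf]
        · exact Finset.sum_congr rfl fun a _ => G.card_incidenceFinset_eq_degree a
        · intro a ha b hb hab
          simp only [Finset.disjoint_left]
          intro e hea heb
          rw [SimpleGraph.mem_incidenceFinset] at hea heb
          have : e = s(a, b) := (Sym2.mem_and_mem_iff hab).mp ⟨hea.2, heb.2⟩
          subst this
          exact hind a ha b hb ((SimpleGraph.mem_edgeSet G).mp hea.1)
      -- sum over all vertices of f equals sum of squares of degrees
      have hsumf : ∑ w, f w = ∑ u, G.degree u * G.degree u := by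
        simp only [hf, SimpleGraph.neighborFinset_eq_filter, Finset.sum_filter]
        rw [Finset.sum_comm]
        refine Finset.sum_congr rfl fun u _ => ?_
        simp only [G.adj_comm _ u]
        rw [← Finset.sum_filter, Finset.sum_const, ← SimpleGraph.neighborFinset_eq_filter]
        rw [smul_eq_mul, G.card_neighborFinset_eq_degree, Nat.mul_comm]
      -- Cauchy–Schwarz over the vertices
      have hcs : (∑ u, G.degree u) ^ 2 ≤ Fintype.card V * ∑ u, G.degree u ^ 2 := by
        simpa [Finset.card_univ] using
          sq_sum_le_card_mul_sum_sq (α := ℕ) (s := Finset.univ) (f := fun u => G.degree u)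
      have hdeg : ∑ u, G.degree u = 2 * G.edgeFinset.card :=
        G.sum_degrees_eq_twice_card_edges
      have hfv : ∑ u, G.degree u * G.degree u ≤ Fintype.card V * f v := by
        calc ∑ u, G.degree u * G.degree u = ∑ w, f w := hsumf.symm
          _ ≤ ∑ _w : V, f v := Finset.sum_le_sum fun w _ => hv w (Finset.mem_univ w)
          _ = Fintype.card V * f v := by
              simp [Finset.sum_const, Finset.card_univ, mul_comm]
      have hkey : (2 * G.edgeFinset.card) ^ 2 ≤ Fintype.card V ^ 2 * f v := by
        calc (2 * G.edgeFinset.card) ^ 2 = (∑ u, G.degree u) ^ 2 := by rw [hdeg]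
          _ ≤ Fintype.card V * ∑ u, G.degree u ^ 2 := hcs
          _ = Fintype.card V * ∑ u, G.degree u * G.degree u := by
              simp [pow_two]
          _ ≤ Fintype.card V * (Fintype.card V * f v) :=
              Nat.mul_le_mul_left _ hfv
          _ = Fintype.card V ^ 2 * f v := by ring
      have hn : (0 : ℝ) < (Fintype.card V : ℝ) := by
        have : 0 < Fintype.card V := Fintype.card_pos_iff.mpr ⟨e₀.out.1⟩
        exact_mod_cast this
      have hcard : (s.card : ℝ) = (G.edgeFinset.card : ℝ) - (f v : ℝ) := by
        have := hst
        rw [htcard] at this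
        have := congrArg (fun k : ℕ => (k : ℝ)) this
        push_cast at this
        linarith
      rw [hcard, sub_le_sub_iff_left, div_le_iff₀ (by positivity)]
      have hkeyR : (2 * (G.edgeFinset.card : ℝ)) ^ 2 ≤
          (Fintype.card V : ℝ) ^ 2 * (f v : ℝ) := by exact_mod_cast hkey
      nlinarith [hkeyR]
    · -- 2-colorability
      refine ⟨SimpleGraph.Coloring.mk (fun u => if u ∈ A then 0 else 1) ?_⟩
      intro a b hab hcol
      rw [SimpleGraph.deleteEdges_adj] at hab
      obtain ⟨hadj, hnots⟩ := hab
      have hmem : s(a, b) ∈ G.edgeFinset := (SimpleGraph.mem_edgeFinset).mpr hadj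
      have : ¬ p s(a, b) := by
        intro hpe
        exact hnots (by simpa [hs] using Finset.mem_filter.mpr ⟨hmem, hpe⟩)
      simp only [hp, not_forall, not_not] at this
      obtain ⟨x, hx, hxA⟩ := this
      rw [Sym2.mem_iff] at hx
      have hnotboth : ¬ (a ∈ A ∧ b ∈ A) := fun ⟨ha, hb⟩ => hind a ha b hb hadj
      rcases hx with rfl | rfl
      · have hbA : b ∉ A := fun hb => hnotboth ⟨hxA, hb⟩
        simp [hxA, hbA] at hcol
      · have haA : a ∉ A := fun ha => hnotboth ⟨ha, hxA⟩
        simp [hxA, haA] at hcol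
  · -- trivial case : no edges
    rw [Finset.not_nonempty_iff_eq_empty] at hne
    refine ⟨∅, by simp, by simp [hne], ?_⟩
    refine ⟨SimpleGraph.Coloring.mk (fun _ => 0) ?_⟩
    intro a b hab hcol
    rw [SimpleGraph.deleteEdges_adj] at hab
    have : s(a, b) ∈ G.edgeFinset := (SimpleGraph.mem_edgeFinset).mpr hab.1
    simp [hne] at this
end

section
/- Let Δ₀ be the equilateral triangle. For every finite point set P ⊆ ℝ² and every integer ℓ ≥ 4 with 3 ∤ ℓ, the 3-graph H(P, Δ₀) on vertex set P, whose hyperedges are the triples of points forming an equilateral triangle, contains no copy of C_ℓ⁻ (the tight cycle on ℓ vertices minus one hyperedge). -/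
open Complex ComplexConjugate

noncomputable def tauEq : ℂ := (-1 + Real.sqrt 3 * I)/2

lemma hs3Eq : ((Real.sqrt 3 : ℂ))^2 = 3 := by
  norm_cast; rw [Real.sq_sqrt]; norm_num

lemma tauEq_quad : tauEq^2 + tauEq + 1 = 0 := by
  unfold tauEq; linear_combination (I^2/4) * hs3Eq + (3/4 : ℂ) * Complex.I_sq

lemma tauEq_sq : ((-1 - Real.sqrt 3 * I)/2 : ℂ) = tauEq^2 := by
  unfold tauEq; linear_combination (-I^2/4) * hs3Eq - (3/4 : ℂ) * Complex.I_sq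

lemma tauEq_cube : tauEq^3 = 1 := by linear_combination (tauEq - 1) * tauEq_quad

lemma tauEq_re : tauEq.re = -1/2 := by simp [tauEq]
lemma tauEq_im : tauEq.im = Real.sqrt 3 / 2 := by simp [tauEq]
lemma tauEq2_re : (tauEq^2).re = -1/2 := by rw [← tauEq_sq]; simp
lemma tauEq2_im : (tauEq^2).im = -(Real.sqrt 3 / 2) := by rw [← tauEq_sq]; simp; ring

lemma rootCasesEq (r : ℂ) (h : r^2 + r + 1 = 0) : r = tauEq ∨ r = tauEq^2 := by
  have h0 : (r - tauEq) * (r - tauEq^2) = 0 := by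
    linear_combination h - r * tauEq_quad + tauEq_cube
  rcases mul_eq_zero.1 h0 with h | h
  · exact Or.inl (sub_eq_zero.1 h)
  · exact Or.inr (sub_eq_zero.1 h)

lemma ratioRootEq (a b c : ℂ) (hab : a ≠ b)
    (h1 : ‖a - b‖ = ‖b - c‖)
    (h2 : ‖b - c‖ = ‖c - a‖) :
    ∃ r : ℂ, r^2 + r + 1 = 0 ∧ c - b = r * (b - a) := by
  have hz : b - a ≠ 0 := sub_ne_zero.2 (Ne.symm hab)
  have hzabs : ‖b - a‖ ≠ 0 := by simpa [sub_eq_zero] using hz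
  set r := (c - b) / (b - a) with hr
  refine ⟨r, ?_, by rw [hr, div_mul_cancel₀ _ hz]⟩
  have habs : ‖c - b‖ = ‖b - a‖ := by
    rw [norm_sub_rev c b, ← h1, norm_sub_rev a b]
  have h1' : normSq r = 1 := by
    rw [hr, normSq_div, ← Complex.sq_norm, ← Complex.sq_norm, habs]
    field_simp
  have h2' : normSq (r + 1) = 1 := by
    have e : r + 1 = (c - a) / (b - a) := by rw [hr, div_add_one hz]; congr 1; ring
    rw [e, normSq_div, ← Complex.sq_norm, ← Complex.sq_norm, ← h2, ← h1,
      norm_sub_rev a b]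
    field_simp
  have hre : 2 * r.re = -1 := by
    have e1 := Complex.normSq_add r 1
    simp [h1', h2'] at e1
    linarith
  have hconj : conj r = -1 - r := by
    apply Complex.ext <;> simp
    · linarith
  have e2 := Complex.mul_conj r
  rw [hconj, h1'] at e2
  push_cast at e2
  linear_combination -e2

lemma countingEq (ℓ : ℕ) (k : ℕ → ℕ)
    (h : ∑ i ∈ Finset.range ℓ, tauEq ^ (k i) = 0) : 3 ∣ ℓ := by
  have hmod : ∀ m : ℕ, tauEq ^ m = tauEq ^ (m % 3) := by
    intro m
    conv_lhs => rw [← Nat.div_add_mod m 3]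
    rw [pow_add, pow_mul, tauEq_cube, one_pow, one_mul]
  have hmem : ∀ i ∈ Finset.range ℓ, k i % 3 ∈ Finset.range 3 := by
    intro i _; simp [Nat.mod_lt _ (by norm_num : 0 < 3)]
  set c : ℕ → ℕ := fun j => ((Finset.range ℓ).filter (fun i => k i % 3 = j)).card with hc
  have hcard : ℓ = c 0 + c 1 + c 2 := by
    have := Finset.card_eq_sum_card_fiberwise hmem
    simpa [Finset.sum_range_succ, hc, add_assoc] using this
  have hsum : (c 0 : ℂ) + (c 1 : ℂ) * tauEq + (c 2 : ℂ) * tauEq^2 = 0 := by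
    have e1 := Finset.sum_fiberwise_of_maps_to hmem (fun i => tauEq ^ (k i))
    rw [← e1] at h
    have e2 : ∀ j, ∑ i ∈ (Finset.range ℓ).filter (fun i => k i % 3 = j),
        tauEq ^ (k i) = (c j : ℂ) * tauEq ^ j := by
      intro j
      have e3 : ∀ i ∈ (Finset.range ℓ).filter (fun i => k i % 3 = j),
          tauEq ^ (k i) = tauEq ^ j := by
        intro i hi
        rw [hmod (k i)]
        congr 1
        exact (Finset.mem_filter.1 hi).2
      rw [Finset.sum_congr rfl e3, Finset.sum_const, nsmul_eq_mul]
    simp only [Finset.sum_range_succ, Finset.sum_range_zero, e2] at h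
    rw [← h]; ring
  have him := congrArg Complex.im hsum
  have hre := congrArg Complex.re hsum
  simp [tauEq_im, tauEq_re, tauEq2_im, tauEq2_re] at him hre
  have hs : (0:ℝ) < Real.sqrt 3 := Real.sqrt_pos.2 (by norm_num)
  have h12 : (c 1 : ℝ) = c 2 := by nlinarith [him, hre, hs]
  have h01 : (c 0 : ℝ) = c 1 := by nlinarith [him, hre, hs]
  have h12' : c 1 = c 2 := Nat.cast_injective h12
  have h01' : c 0 = c 1 := Nat.cast_injective h01
  exact ⟨c 0, by omega⟩

open Complex in
lemma cdistEq (x y : EuclideanSpace ℝ (Fin 2)) :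
    dist x y = ‖(x 0 + x 1 * I) - (y 0 + y 1 * I)‖ := by
  rw [EuclideanSpace.dist_eq, Complex.norm_def, Complex.normSq_apply]
  simp [Fin.sum_univ_two, Real.dist_eq, abs_sub_comm]
  congr 1
  ring

/-- For every finite planar point set `P` and every `ℓ ≥ 4` with `3 ∤ ℓ`, the 3-graph
on `P` whose hyperedges are the equilateral triangles spanned by `P` contains no copy of
`C_ℓ⁻` (the tight cycle on `ℓ` vertices minus one hyperedge): there is no injective
sequence `v₀, …, v_{ℓ-1}` of points of `P` such that for every `0 ≤ i ≤ ℓ-2` the three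
points `v_i, v_{i+1 mod ℓ}, v_{i+2 mod ℓ}` form an equilateral triangle. -/
theorem stmt12 (P : Finset (EuclideanSpace ℝ (Fin 2))) (ℓ : ℕ) (hℓ : 4 ≤ ℓ)
    (h3 : ¬ 3 ∣ ℓ) :
    ¬ ∃ v : ℕ → EuclideanSpace ℝ (Fin 2),
        (∀ i, i < ℓ → v i ∈ P) ∧
        (∀ i j, i < ℓ → j < ℓ → v i = v j → i = j) ∧
        (∀ i, i + 2 ≤ ℓ →
          dist (v i) (v ((i + 1) % ℓ)) = dist (v ((i + 1) % ℓ)) (v ((i + 2) % ℓ)) ∧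
          dist (v ((i + 1) % ℓ)) (v ((i + 2) % ℓ)) = dist (v ((i + 2) % ℓ)) (v i)) := by
  rintro ⟨v, _hP, hinj, heq⟩
  set w : ℕ → ℂ := fun i => (v i 0 : ℂ) + (v i 1) * I with hw
  have hdist : ∀ a b, dist (v a) (v b) = ‖w a - w b‖ := by
    intro a b; rw [cdistEq]
  have hwinj : ∀ a b, a < ℓ → b < ℓ → w a = w b → a = b := by
    intro a b ha hb hab
    apply hinj a b ha hb
    have hre := congrArg Complex.re hab
    have him := congrArg Complex.im hab
    simp [hw] at hre him
    ext j
    fin_cases j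
    · exact hre
    · exact him
  set z : ℕ → ℂ := fun i => w ((i+1) % ℓ) - w i with hz
  have hz0 : ∀ i, i < ℓ → z i ≠ 0 := by
    intro i hi h0
    have hne : (i+1) % ℓ ≠ i := by
      rcases Nat.lt_or_ge (i+1) ℓ with h | h
      · rw [Nat.mod_eq_of_lt h]; omega
      · have : i + 1 = ℓ := by omega
        rw [this, Nat.mod_self]; omega
    exact hne (hwinj _ _ (Nat.mod_lt _ (by omega)) hi (sub_eq_zero.1 h0))
  have hstep : ∀ i, i + 2 ≤ ℓ → ∃ r : ℂ, r^2 + r + 1 = 0 ∧ z (i+1) = r * z i := by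
    intro i hi
    have h1 : (i + 1) % ℓ = i + 1 := Nat.mod_eq_of_lt (by omega)
    have h2 : (i + 2) % ℓ = (i + 1 + 1) % ℓ := by ring_nf
    obtain ⟨e1, e2⟩ := heq i hi
    rw [hdist, hdist, h1] at e1
    rw [hdist, hdist, h1] at e2
    have hab : w i ≠ w (i+1) := fun h =>
      absurd (hwinj _ _ (by omega) (by omega) h) (by omega)
    obtain ⟨r, hr, hrel⟩ := ratioRootEq (w i) (w (i+1)) (w ((i+2) % ℓ)) hab e1 e2
    refine ⟨r, hr, ?_⟩
    simp only [hz, h1, h2]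
    exact hrel
  have hk : ∀ i, i < ℓ → ∃ m : ℕ, z i = tauEq ^ m * z 0 := by
    intro i
    induction i with
    | zero => exact fun _ => ⟨0, by simp⟩
    | succ n ih =>
      intro hn
      obtain ⟨m, hm⟩ := ih (by omega)
      obtain ⟨r, hr, hrel⟩ := hstep n (by omega)
      rcases rootCasesEq r hr with rfl | rfl
      · exact ⟨m + 1, by rw [hrel, hm]; ring⟩
      · exact ⟨m + 2, by rw [hrel, hm]; ring⟩
  have hk' : ∀ i, ∃ m : ℕ, i < ℓ → z i = tauEq ^ m * z 0 := by
    intro i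
    by_cases h : i < ℓ
    · exact (hk i h).imp fun m hm _ => hm
    · exact ⟨0, fun h' => absurd h' h⟩
  choose k hkk using hk'
  have hsumz : ∑ i ∈ Finset.range ℓ, z i = 0 := by
    have hsplit : ℓ = (ℓ - 1) + 1 := by omega
    rw [hsplit, Finset.sum_range_succ]
    have e1 : ∑ i ∈ Finset.range (ℓ - 1), z i
        = ∑ i ∈ Finset.range (ℓ - 1), (w (i+1) - w i) := by
      apply Finset.sum_congr rfl
      intro i hi
      have : (i + 1) % ℓ = i + 1 :=
        Nat.mod_eq_of_lt (by have := Finset.mem_range.1 hi; omega)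
      simp only [hz, this]
    have e2 : z (ℓ - 1) = w 0 - w (ℓ - 1) := by
      have : (ℓ - 1 + 1) % ℓ = 0 := by
        rw [(by omega : ℓ - 1 + 1 = ℓ), Nat.mod_self]
      simp only [hz, this]
    rw [e1, e2, Finset.sum_range_sub (fun i => w i)]
    ring
  have hfact : (∑ i ∈ Finset.range ℓ, tauEq ^ (k i)) * z 0 = 0 := by
    rw [Finset.sum_mul, ← hsumz]
    apply Finset.sum_congr rfl
    intro i hi
    exact (hkk i (Finset.mem_range.1 hi)).symm
  have hzero : ∑ i ∈ Finset.range ℓ, tauEq ^ (k i) = 0 := by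
    rcases mul_eq_zero.1 hfact with h | h
    · exact h
    · exact absurd h (hz0 0 (by omega))
  exact h3 (countingEq ℓ k hzero)
end

section
/- Color the triangular lattice P₀ = {x·(1,0) + y·(1/2, √3/2) : x, y ∈ ℤ} with three colors by assigning to the point x·v₁ + y·v₂ the color (x + 2y) mod 3. Then every equilateral triangle with side length 1 whose vertices lie in P₀ has all three vertices of distinct colors. -/
lemma keyInt (a b : ℤ) (h : a^2 + a*b + b^2 = 1) (hd : (a + 2*b) % 3 = 0) : False := by
  obtain ⟨k, hk⟩ : ∃ k, a + 2*b = 3*k := ⟨(a+2*b)/3, by omega⟩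
  have ha : a = 3*k - 2*b := by omega
  subst ha
  have h2 : 3*(3*k^2 - 3*k*b + b^2) = 1 := by linear_combination h
  omega

lemma keyReal (a b : ℤ) (h : ((a : ℝ) + (b : ℝ) / 2) ^ 2
    + ((b : ℝ) * Real.sqrt 3 / 2) ^ 2 = 1) : (a + 2*b) % 3 ≠ 0 := by
  have h3 : Real.sqrt 3 ^ 2 = 3 := Real.sq_sqrt (by norm_num)
  have hi : a^2 + a*b + b^2 = 1 := by
    have : ((a:ℝ))^2 + (a:ℝ)*(b:ℝ) + (b:ℝ)^2 = 1 := by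
      linear_combination h - ((b:ℝ)^2/4) * h3
    exact_mod_cast this
  exact keyInt a b hi

/-- Color the point `x·(1,0) + y·(1/2, √3/2)` of the triangular lattice with color
`(x + 2y) mod 3`. Every equilateral triangle of side length `1` with vertices in the
lattice is rainbow: here the point with lattice coordinates `(x, y)` is
`(x + y/2, y·√3/2) ∈ ℝ²`, and pairwise (Euclidean) distances are `1`. -/
theorem stmt13 (x₁ y₁ x₂ y₂ x₃ y₃ : ℤ)
    (h12 : ((x₁ : ℝ) + (y₁ : ℝ) / 2 - ((x₂ : ℝ) + (y₂ : ℝ) / 2)) ^ 2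
        + ((y₁ : ℝ) * Real.sqrt 3 / 2 - (y₂ : ℝ) * Real.sqrt 3 / 2) ^ 2 = 1)
    (h23 : ((x₂ : ℝ) + (y₂ : ℝ) / 2 - ((x₃ : ℝ) + (y₃ : ℝ) / 2)) ^ 2
        + ((y₂ : ℝ) * Real.sqrt 3 / 2 - (y₃ : ℝ) * Real.sqrt 3 / 2) ^ 2 = 1)
    (h13 : ((x₁ : ℝ) + (y₁ : ℝ) / 2 - ((x₃ : ℝ) + (y₃ : ℝ) / 2)) ^ 2
        + ((y₁ : ℝ) * Real.sqrt 3 / 2 - (y₃ : ℝ) * Real.sqrt 3 / 2) ^ 2 = 1) :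
    (x₁ + 2 * y₁) % 3 ≠ (x₂ + 2 * y₂) % 3 ∧
    (x₂ + 2 * y₂) % 3 ≠ (x₃ + 2 * y₃) % 3 ∧
    (x₁ + 2 * y₁) % 3 ≠ (x₃ + 2 * y₃) % 3 := by
  have k12 := keyReal (x₁ - x₂) (y₁ - y₂) (by push_cast; linear_combination h12)
  have k23 := keyReal (x₂ - x₃) (y₂ - y₃) (by push_cast; linear_combination h23)
  have k13 := keyReal (x₁ - x₃) (y₁ - y₃) (by push_cast; linear_combination h13)
  omega
end

section
/- Let ℓ₁, ℓ₂ ≥ 4 be integers with ℓ₁ ≥ 2ℓ₂ - 3 and 3 ∤ ℓ₂. Then there exists a positive integer t such that the t-blow-up of C_{ℓ₂}⁻ contains C_{ℓ₁}⁻ as a subhypergraph. -/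
set_option maxHeartbeats 1600000

private def Conc (ℓ₁ ℓ₂ : ℕ) : Prop :=
  ∃ t : ℕ, 0 < t ∧ ∃ f : ℕ → ℕ × ℕ,
      (∀ i, i < ℓ₁ → (f i).1 < ℓ₂ ∧ (f i).2 < t) ∧
      (∀ i j, i < ℓ₁ → j < ℓ₁ → f i = f j → i = j) ∧
      (∀ i, i + 2 ≤ ℓ₁ → ∃ j, j + 2 ≤ ℓ₂ ∧
        ({(f i).1, (f ((i + 1) % ℓ₁)).1, (f ((i + 2) % ℓ₁)).1} : Finset ℕ)
          = ({j, (j + 1) % ℓ₂, (j + 2) % ℓ₂} : Finset ℕ))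

private lemma tri_eq (a b c d e g : ℕ)
    (h : ∀ z : ℕ, (z = a ∨ z = b ∨ z = c) ↔ (z = d ∨ z = e ∨ z = g)) :
    ({a, b, c} : Finset ℕ) = {d, e, g} := by
  ext z
  simp only [Finset.mem_insert, Finset.mem_singleton]
  exact h z

private lemma case0 (ℓ₁ ℓ₂ : ℕ) (h1 : 4 ≤ ℓ₁) (h2 : 4 ≤ ℓ₂)
    (hm : ℓ₁ % 3 = 0) : Conc ℓ₁ ℓ₂ := by
  refine ⟨ℓ₁, by omega, fun i => (i % 3, i), fun i hi => ⟨by show i % 3 < ℓ₂; omega, hi⟩,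
    fun i j _ _ h => by simpa using congrArg Prod.snd h, fun i hi => ?_⟩
  have e1 : (i + 1) % ℓ₁ = i + 1 := Nat.mod_eq_of_lt (by omega)
  have t1 : (0 + 1) % ℓ₂ = 1 := Nat.mod_eq_of_lt (by omega)
  have t2 : (0 + 2) % ℓ₂ = 2 := Nat.mod_eq_of_lt (by omega)
  refine ⟨0, by omega, ?_⟩
  rcases eq_or_lt_of_le hi with heq | hlt
  · have e2 : (i + 2) % ℓ₁ = 0 := by rw [heq, Nat.mod_self]
    dsimp only
    rw [e1, e2, t1, t2]
    exact tri_eq _ _ _ _ _ _ (fun z => by omega)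
  · have e2 : (i + 2) % ℓ₁ = i + 2 := Nat.mod_eq_of_lt hlt
    dsimp only
    rw [e1, e2, t1, t2]
    exact tri_eq _ _ _ _ _ _ (fun z => by omega)

private lemma case1 (ℓ₁ ℓ₂ : ℕ) (h1 : 4 ≤ ℓ₁) (h2 : 4 ≤ ℓ₂)
    (hm : ℓ₁ % 3 = ℓ₂ % 3) (hge : ℓ₂ ≤ ℓ₁) : Conc ℓ₁ ℓ₂ := by
  obtain ⟨s, hs⟩ : ∃ s, ℓ₁ = ℓ₂ + 3 * s := ⟨(ℓ₁ - ℓ₂) / 3, by omega⟩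
  refine ⟨ℓ₁, by omega,
    fun i => (if i < 3 * s then i % 3 else i - 3 * s, i),
    fun i hi => ⟨by dsimp only; split <;> omega, hi⟩,
    fun i j _ _ h => by simpa using congrArg Prod.snd h, fun i hi => ?_⟩
  have e1 : (i + 1) % ℓ₁ = i + 1 := Nat.mod_eq_of_lt (by omega)
  rcases eq_or_lt_of_le hi with heq | hlt
  · -- wrap-around window: j = ℓ₂ - 2
    have e2 : (i + 2) % ℓ₁ = 0 := by rw [heq, Nat.mod_self]
    refine ⟨ℓ₂ - 2, by omega, ?_⟩
    have t1 : (ℓ₂ - 2 + 1) % ℓ₂ = ℓ₂ - 1 := by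
      have h'' : ℓ₂ - 2 + 1 = ℓ₂ - 1 := by omega
      rw [h'']; exact Nat.mod_eq_of_lt (by omega)
    have t2 : (ℓ₂ - 2 + 2) % ℓ₂ = 0 := by
      have h' : ℓ₂ - 2 + 2 = ℓ₂ := by omega
      rw [h', Nat.mod_self]
    dsimp only
    rw [e1, e2, t1, t2]
    refine tri_eq _ _ _ _ _ _ (fun z => ?_)
    split_ifs <;> omega
  · have e2 : (i + 2) % ℓ₁ = i + 2 := Nat.mod_eq_of_lt hlt
    rcases lt_or_ge i (3 * s) with hb | hb
    · refine ⟨0, by omega, ?_⟩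
      have t1 : (0 + 1) % ℓ₂ = 1 := Nat.mod_eq_of_lt (by omega)
      have t2 : (0 + 2) % ℓ₂ = 2 := Nat.mod_eq_of_lt (by omega)
      dsimp only
      rw [e1, e2, t1, t2]
      refine tri_eq _ _ _ _ _ _ (fun z => ?_)
      split_ifs <;> omega
    · refine ⟨i - 3 * s, by omega, ?_⟩
      have t1 : (i - 3 * s + 1) % ℓ₂ = i - 3 * s + 1 := Nat.mod_eq_of_lt (by omega)
      have t2 : (i - 3 * s + 2) % ℓ₂ = i - 3 * s + 2 := Nat.mod_eq_of_lt (by omega)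
      dsimp only
      rw [e1, e2, t1, t2]
      refine tri_eq _ _ _ _ _ _ (fun z => ?_)
      split_ifs <;> omega

private lemma case2 (ℓ₁ ℓ₂ : ℕ) (h1 : 4 ≤ ℓ₁) (h2 : 4 ≤ ℓ₂)
    (hm : ℓ₁ % 3 = (2 * ℓ₂) % 3) (hge : 2 * ℓ₂ - 3 ≤ ℓ₁) : Conc ℓ₁ ℓ₂ := by
  obtain ⟨s, hs⟩ : ∃ s, ℓ₁ = (2 * ℓ₂ - 3) + 3 * s := ⟨(ℓ₁ - (2 * ℓ₂ - 3)) / 3, by omega⟩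
  set X : ℕ → ℕ := fun i =>
    if i < 3 * s then (if i % 3 = 0 then 0 else if i % 3 = 1 then 2 else 1)
    else (if (i - 3 * s) % 2 = 0 then (i - 3 * s) / 2 else (i - 3 * s) / 2 + 2) with hX
  have hXval : ∀ i, X i =
      if i < 3 * s then (if i % 3 = 0 then 0 else if i % 3 = 1 then 2 else 1)
      else (if (i - 3 * s) % 2 = 0 then (i - 3 * s) / 2 else (i - 3 * s) / 2 + 2) :=
    fun i => rfl
  refine ⟨ℓ₁, by omega, fun i => (X i, i),
    fun i hi => ⟨by rw [show ((fun i => (X i, i)) i).1 = X i from rfl, hXval i];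
                    split_ifs <;> omega, hi⟩,
    fun i j _ _ h => by simpa using congrArg Prod.snd h, fun i hi => ?_⟩
  have e1 : (i + 1) % ℓ₁ = i + 1 := Nat.mod_eq_of_lt (by omega)
  have hX0 : X 0 = 0 := by rw [hXval]; split_ifs <;> omega
  rcases eq_or_lt_of_le hi with heq | hlt
  · -- wrap-around window: j = ℓ₂ - 2
    have e2 : (i + 2) % ℓ₁ = 0 := by rw [heq, Nat.mod_self]
    refine ⟨ℓ₂ - 2, by omega, ?_⟩
    have t1 : (ℓ₂ - 2 + 1) % ℓ₂ = ℓ₂ - 1 := by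
      have h'' : ℓ₂ - 2 + 1 = ℓ₂ - 1 := by omega
      rw [h'']; exact Nat.mod_eq_of_lt (by omega)
    have t2 : (ℓ₂ - 2 + 2) % ℓ₂ = 0 := by
      have h' : ℓ₂ - 2 + 2 = ℓ₂ := by omega
      rw [h', Nat.mod_self]
    have v1 : X i = ℓ₂ - 1 := by rw [hXval]; split_ifs <;> omega
    have v2 : X (i + 1) = ℓ₂ - 2 := by rw [hXval]; split_ifs <;> omega
    show ({X i, X ((i + 1) % ℓ₁), X ((i + 2) % ℓ₁)} : Finset ℕ) = _
    rw [e1, e2, t1, t2, v1, v2, hX0]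
    exact tri_eq _ _ _ _ _ _ (fun z => by omega)
  · have e2 : (i + 2) % ℓ₁ = i + 2 := Nat.mod_eq_of_lt hlt
    show ∃ j, j + 2 ≤ ℓ₂ ∧
      ({X i, X ((i + 1) % ℓ₁), X ((i + 2) % ℓ₁)} : Finset ℕ)
        = ({j, (j + 1) % ℓ₂, (j + 2) % ℓ₂} : Finset ℕ)
    rw [e1, e2]
    rcases lt_or_ge i (3 * s) with hb | hb
    · refine ⟨0, by omega, ?_⟩
      have t1 : (0 + 1) % ℓ₂ = 1 := Nat.mod_eq_of_lt (by omega)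
      have t2 : (0 + 2) % ℓ₂ = 2 := Nat.mod_eq_of_lt (by omega)
      rw [t1, t2, hXval i, hXval (i + 1), hXval (i + 2)]
      refine tri_eq _ _ _ _ _ _ (fun z => ?_)
      split_ifs <;> omega
    · rcases (show (i - 3 * s) % 2 = 0 ∨ (i - 3 * s) % 2 = 1 by omega) with hk' | hk'
      ·
        refine ⟨(i - 3 * s) / 2, by omega, ?_⟩
        have t1 : ((i - 3 * s) / 2 + 1) % ℓ₂ = (i - 3 * s) / 2 + 1 :=
          Nat.mod_eq_of_lt (by omega)
        have t2 : ((i - 3 * s) / 2 + 2) % ℓ₂ = (i - 3 * s) / 2 + 2 :=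
          Nat.mod_eq_of_lt (by omega)
        have v1 : X i = (i - 3 * s) / 2 := by rw [hXval]; split_ifs <;> omega
        have v2 : X (i + 1) = (i - 3 * s) / 2 + 2 := by rw [hXval]; split_ifs <;> omega
        have v3 : X (i + 2) = (i - 3 * s) / 2 + 1 := by rw [hXval]; split_ifs <;> omega
        rw [t1, t2, v1, v2, v3]
        exact tri_eq _ _ _ _ _ _ (fun z => by omega)
      ·
        refine ⟨(i - 3 * s) / 2 + 1, by omega, ?_⟩
        have t1 : ((i - 3 * s) / 2 + 1 + 1) % ℓ₂ = (i - 3 * s) / 2 + 2 :=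
          Nat.mod_eq_of_lt (by omega)
        have t2 : ((i - 3 * s) / 2 + 1 + 2) % ℓ₂ = (i - 3 * s) / 2 + 3 :=
          Nat.mod_eq_of_lt (by omega)
        have v1 : X i = (i - 3 * s) / 2 + 2 := by rw [hXval]; split_ifs <;> omega
        have v2 : X (i + 1) = (i - 3 * s) / 2 + 1 := by rw [hXval]; split_ifs <;> omega
        have v3 : X (i + 2) = (i - 3 * s) / 2 + 3 := by rw [hXval]; split_ifs <;> omega
        rw [t1, t2, v1, v2, v3]
        exact tri_eq _ _ _ _ _ _ (fun z => by omega)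

/-- Claim 5.7: for `ℓ₁, ℓ₂ ≥ 4` with `ℓ₁ ≥ 2ℓ₂ - 3` and `3 ∤ ℓ₂`, some `t`-blow-up of
`C_{ℓ₂}⁻` contains `C_{ℓ₁}⁻`. Vertices of `C_ℓ⁻` are `{0,…,ℓ-1}` and its hyperedges
are `{i, (i+1) mod ℓ, (i+2) mod ℓ}` for `0 ≤ i ≤ ℓ-2`; a vertex of the blow-up is a
pair (vertex, copy index), and a copy of `C_{ℓ₁}⁻` is an injective map `f` sending
each hyperedge of `C_{ℓ₁}⁻` to a blow-up of a hyperedge of `C_{ℓ₂}⁻`. -/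
theorem stmt14 (ℓ₁ ℓ₂ : ℕ) (h1 : 4 ≤ ℓ₁) (h2 : 4 ≤ ℓ₂)
    (hge : 2 * ℓ₂ - 3 ≤ ℓ₁) (h3 : ¬ 3 ∣ ℓ₂) :
    ∃ t : ℕ, 0 < t ∧ ∃ f : ℕ → ℕ × ℕ,
      (∀ i, i < ℓ₁ → (f i).1 < ℓ₂ ∧ (f i).2 < t) ∧
      (∀ i j, i < ℓ₁ → j < ℓ₁ → f i = f j → i = j) ∧
      (∀ i, i + 2 ≤ ℓ₁ → ∃ j, j + 2 ≤ ℓ₂ ∧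
        ({(f i).1, (f ((i + 1) % ℓ₁)).1, (f ((i + 2) % ℓ₁)).1} : Finset ℕ)
          = ({j, (j + 1) % ℓ₂, (j + 2) % ℓ₂} : Finset ℕ)) := by
  have h2b : (2 * ℓ₂) % 3 = 2 * (ℓ₂ % 3) % 3 := by
    rw [Nat.mul_mod]
  have hb : ℓ₂ % 3 = 1 ∨ ℓ₂ % 3 = 2 := by omega
  have hres : ℓ₁ % 3 = 0 ∨ ℓ₁ % 3 = ℓ₂ % 3 ∨ ℓ₁ % 3 = (2 * ℓ₂) % 3 := by
    rcases hb with hb | hb <;> rw [h2b, hb] <;> omega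
  rcases hres with h | h | h
  · exact case0 ℓ₁ ℓ₂ h1 h2 h
  · exact case1 ℓ₁ ℓ₂ h1 h2 h (by omega)
  · exact case2 ℓ₁ ℓ₂ h1 h2 h hge
end

section
/- For every ε₁, ε₂ with ε₁/24 > ε₂ > 0, there exist δ > ε₁²(ε₁ - 24ε₂)/24³ and N such that for every tournament T on n > N vertices with at least (1/24 - δ)n³ cyclic triangles, the number of vertex pairs {u,v} contained in at most ε₂n cyclic triangles of T is less than ε₁n². -/
open scoped Classical

open Finset

section Aux

variable {n : ℕ} {r : Fin n → Fin n → Prop}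

lemma tourn_total (hT : IsTournament r) {a b : Fin n} (hab : a ≠ b) (h : ¬ r a b) : r b a := by
  by_contra hb
  exact h ((hT.2 a b hab).mpr hb)

lemma tourn_asymm (hT : IsTournament r) {a b : Fin n} (h1 : r a b) (h2 : r b a) : False := by
  have hab : a ≠ b := by rintro rfl; exact hT.1 a h1
  exact ((hT.2 a b hab).mp h1) h2

lemma double_count (hT : IsTournament r) (A : Finset (Fin n)) :
    2 * ∑ v ∈ A, (A.filter (fun w => r v w)).card = A.card * (A.card - 1) := by
  have key : ∀ v w : Fin n, ((if r v w then 1 else 0) + (if r w v then 1 else 0) : ℕ)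
      = (if v ≠ w then 1 else 0) := by
    intro v w
    by_cases hvw : v = w
    · subst hvw; simp [hT.1 v]
    · by_cases h : r v w
      · have h' : ¬ r w v := fun h' => tourn_asymm hT h h'
        simp [h, h', hvw]
      · have h' : r w v := tourn_total hT hvw h
        simp [h, h', hvw]
  have e1 : ∑ v ∈ A, (A.filter (fun w => r v w)).card
      = ∑ v ∈ A, ∑ w ∈ A, (if r v w then 1 else 0) := by
    refine Finset.sum_congr rfl fun v _ => ?_
    rw [Finset.card_filter]
  have e2 : ∑ v ∈ A, ∑ w ∈ A, ((if r w v then 1 else 0) : ℕ)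
      = ∑ v ∈ A, ∑ w ∈ A, (if r v w then 1 else 0) := Finset.sum_comm
  have e3 : ∑ v ∈ A, ∑ w ∈ A, ((if r v w then 1 else 0) + (if r w v then 1 else 0) : ℕ)
      = ∑ v ∈ A, ∑ w ∈ A, ((if v ≠ w then 1 else 0) : ℕ) :=
    Finset.sum_congr rfl fun v _ => Finset.sum_congr rfl fun w _ => key v w
  have e4 : ∑ v ∈ A, ∑ w ∈ A, ((if v ≠ w then 1 else 0) : ℕ) = A.card * (A.card - 1) := by
    have inner : ∀ v ∈ A, ∑ w ∈ A, ((if v ≠ w then 1 else 0) : ℕ) = A.card - 1 := by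
      intro v hv
      rw [← Finset.card_filter, Finset.filter_ne, Finset.card_erase_of_mem hv]
    rw [Finset.sum_congr rfl inner, Finset.sum_const, smul_eq_mul]
  calc 2 * ∑ v ∈ A, (A.filter (fun w => r v w)).card
      = ∑ v ∈ A, ∑ w ∈ A, ((if r v w then 1 else 0) : ℕ)
        + ∑ v ∈ A, ∑ w ∈ A, ((if r w v then 1 else 0) : ℕ) := by
        rw [two_mul, e1, e2]
    _ = ∑ v ∈ A, ∑ w ∈ A, ((if r v w then 1 else 0) + (if r w v then 1 else 0) : ℕ) := by
        rw [← Finset.sum_add_distrib]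
        exact Finset.sum_congr rfl fun v _ => (Finset.sum_add_distrib).symm
    _ = A.card * (A.card - 1) := by rw [e3, e4]

lemma cyc_card_bound (hT : IsTournament r) :
    (cyclicTriangles n r).card
      + ∑ v : Fin n, ((Finset.univ.filter (fun w => r v w)).card).choose 2 ≤ n.choose 3 := by
  classical
  set P3 : Finset (Finset (Fin n)) := Finset.powersetCard 3 Finset.univ with hP3
  set Sig := (Finset.univ : Finset (Fin n)).sigma
      (fun v => (Finset.univ.filter (fun w => r v w)).powersetCard 2) with hSig
  have hcard_sig : Sig.card
      = ∑ v : Fin n, ((Finset.univ.filter (fun w => r v w)).card).choose 2 := by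
    rw [hSig, Finset.card_sigma]
    exact Finset.sum_congr rfl fun v _ => Finset.card_powersetCard _ _
  have hmem : ∀ p ∈ Sig, (insert p.1 p.2 : Finset (Fin n)) ∈ P3 \ cyclicTriangles n r := by
    rintro ⟨v, e⟩ hp
    dsimp only
    rw [hSig, Finset.mem_sigma] at hp
    obtain ⟨-, he⟩ := hp
    rw [Finset.mem_powersetCard] at he
    obtain ⟨hesub, hecard⟩ := he
    have hbeats : ∀ w ∈ e, r v w := fun w hw => (Finset.mem_filter.mp (hesub hw)).2
    have hvnot : v ∉ e := fun hv => hT.1 v (hbeats v hv)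
    have hcard3 : (insert v e).card = 3 := by
      rw [Finset.card_insert_of_notMem hvnot, hecard]
    rw [Finset.mem_sdiff]
    constructor
    · rw [hP3, Finset.mem_powersetCard]
      exact ⟨Finset.subset_univ _, hcard3⟩
    · intro hcyc
      rw [cyclicTriangles, Finset.mem_filter] at hcyc
      obtain ⟨-, a, b, c, ha, hb, hc, rab, rbc, rca⟩ := hcyc
      have hab : a ≠ b := by rintro rfl; exact hT.1 a rab
      have hbc : b ≠ c := by rintro rfl; exact hT.1 b rbc
      have hca : c ≠ a := by rintro rfl; exact hT.1 c rca
      -- v is one of a, b, c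
      have hv : v = a ∨ v = b ∨ v = c := by
        by_contra hvn
        push_neg at hvn
        obtain ⟨h1, h2, h3⟩ := hvn
        have hsub : ({a, b, c} : Finset (Fin n)) ⊆ e := by
          intro z hz
          simp only [Finset.mem_insert, Finset.mem_singleton] at hz
          rcases hz with rfl | rfl | rfl
          · rcases Finset.mem_insert.mp ha with h | h
            · exact absurd h.symm h1
            · exact h
          · rcases Finset.mem_insert.mp hb with h | h
            · exact absurd h.symm h2
            · exact h
          · rcases Finset.mem_insert.mp hc with h | h
            · exact absurd h.symm h3
            · exact h
        have hcard : ({a, b, c} : Finset (Fin n)).card = 3 := by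
          rw [Finset.card_insert_of_notMem (by simp [hab, hca.symm]),
            Finset.card_insert_of_notMem (by simp [hbc]), Finset.card_singleton]
        have hle3 := Finset.card_le_card hsub
        rw [hcard, hecard] at hle3
        omega
      rcases hv with hv | hv | hv
      · -- v = a : c ∈ e, r c a with r a c
        have hce : c ∈ e := by
          rcases Finset.mem_insert.mp hc with h | h
          · exact absurd (h.trans hv) hca
          · exact h
        exact tourn_asymm hT (hbeats c hce) (hv ▸ rca)
      · have hae : a ∈ e := by
          rcases Finset.mem_insert.mp ha with h | h
          · exact absurd (h.trans hv) hab
          · exact h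
        exact tourn_asymm hT (hbeats a hae) (hv ▸ rab)
      · have hbe : b ∈ e := by
          rcases Finset.mem_insert.mp hb with h | h
          · exact absurd (h.trans hv) hbc
          · exact h
        exact tourn_asymm hT (hbeats b hbe) (hv ▸ rbc)
  have hinj : Set.InjOn (fun p : (Σ _ : Fin n, Finset (Fin n)) => insert p.1 p.2) Sig := by
    rintro ⟨v, e⟩ hp ⟨v', e'⟩ hq heq
    simp only at heq
    have hp : (⟨v, e⟩ : Σ _ : Fin n, Finset (Fin n)) ∈ Sig := Finset.mem_coe.mp hp
    have hq : (⟨v', e'⟩ : Σ _ : Fin n, Finset (Fin n)) ∈ Sig := Finset.mem_coe.mp hq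
    rw [hSig, Finset.mem_sigma] at hp hq
    have hbeats : ∀ w ∈ e, r v w := fun w hw =>
      (Finset.mem_filter.mp ((Finset.mem_powersetCard.mp hp.2).1 hw)).2
    have hbeats' : ∀ w ∈ e', r v' w := fun w hw =>
      (Finset.mem_filter.mp ((Finset.mem_powersetCard.mp hq.2).1 hw)).2
    have hvnot : v ∉ e := fun hv => hT.1 v (hbeats v hv)
    have hvnot' : v' ∉ e' := fun hv => hT.1 v' (hbeats' v' hv)
    have hvv : v = v' := by
      by_contra hne
      have h1 : v ∈ insert v' e' := heq ▸ Finset.mem_insert_self v e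
      have h2 : v' ∈ insert v e := heq ▸ Finset.mem_insert_self v' e'
      have hve' : v ∈ e' := by
        rcases Finset.mem_insert.mp h1 with h | h
        · exact absurd h hne
        · exact h
      have hv'e : v' ∈ e := by
        rcases Finset.mem_insert.mp h2 with h | h
        · exact absurd h.symm hne
        · exact h
      exact tourn_asymm hT (hbeats v' hv'e) (hbeats' v hve')
    subst hvv
    have hee : e = e' := by
      have := congrArg (fun s => Finset.erase s v) heq
      simpa [Finset.erase_insert hvnot, Finset.erase_insert hvnot'] using this
    subst hee
    rfl
  have hle : Sig.card ≤ (P3 \ cyclicTriangles n r).card :=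
    Finset.card_le_card_of_injOn _ hmem hinj
  have hsub : cyclicTriangles n r ⊆ P3 := Finset.filter_subset _ _
  have hsd : (P3 \ cyclicTriangles n r).card = P3.card - (cyclicTriangles n r).card :=
    Finset.card_sdiff_of_subset hsub
  have hcycle : (cyclicTriangles n r).card ≤ P3.card := Finset.card_le_card hsub
  have hP3card : P3.card = n.choose 3 := by
    rw [hP3, Finset.card_powersetCard, Finset.card_univ, Fintype.card_fin]
  omega

noncomputable def oth {n : ℕ} (b : Fin n) (s : Finset (Fin n)) : Fin n :=
  if h : (s.erase b).Nonempty then h.choose else b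

lemma oth_spec {n : ℕ} {b : Fin n} {s : Finset (Fin n)} (hb : b ∈ s) (hcard : s.card = 2) :
    oth b s ∈ s ∧ oth b s ≠ b ∧ s = insert b {oth b s} := by
  have h1 : (s.erase b).card = 1 := by rw [Finset.card_erase_of_mem hb, hcard]
  have hne : (s.erase b).Nonempty := Finset.card_pos.mp (by omega)
  have hmem : oth b s ∈ s.erase b := by rw [oth, dif_pos hne]; exact hne.choose_spec
  obtain ⟨a, ha⟩ := Finset.card_eq_one.mp h1
  have hoa : oth b s = a := by rw [ha] at hmem; exact Finset.mem_singleton.mp hmem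
  refine ⟨Finset.mem_of_mem_erase hmem, (Finset.mem_erase.mp hmem).1, ?_⟩
  rw [hoa, ← ha, Finset.insert_erase hb]

lemma card_pairs_containing {n : ℕ} (D : Finset (Finset (Fin n)))
    (hD : ∀ s ∈ D, s.card = 2) (b : Fin n) :
    (D.filter (fun s => b ∈ s)).card ≤ n := by
  have h : (D.filter (fun s => b ∈ s)).card ≤ (Finset.univ : Finset (Fin n)).card := by
    refine Finset.card_le_card_of_injOn (fun s => oth b s) (fun s _ => Finset.mem_univ _) ?_
    intro s hs t ht hst
    simp only [Finset.coe_filter, Set.mem_setOf_eq] at hs ht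
    have h1 := (oth_spec hs.2 (hD s hs.1)).2.2
    have h2 := (oth_spec ht.2 (hD t ht.1)).2.2
    have hst' : oth b s = oth b t := hst
    rw [h1, h2, hst']
  simpa using h

end Aux
set_option maxHeartbeats 2000000 in
/-- Lemma 3.8: for `ε₁/24 > ε₂ > 0` there exist `δ > ε₁²(ε₁ - 24ε₂)/24³` and `N` such
that every tournament on `n > N` vertices with at least `(1/24 - δ)n³` cyclic triangles
has fewer than `ε₁n²` unordered vertex pairs lying in at most `ε₂n` cyclic triangles. -/
theorem stmt18 (ε₁ ε₂ : ℝ) (h2 : 0 < ε₂) (h1 : ε₂ < ε₁ / 24) :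
    ∃ δ : ℝ, ε₁ ^ 2 * (ε₁ - 24 * ε₂) / 24 ^ 3 < δ ∧ ∃ N : ℕ,
      ∀ n : ℕ, N < n → ∀ r : Fin n → Fin n → Prop, IsTournament r →
        ((1 : ℝ) / 24 - δ) * n ^ 3 ≤ ((cyclicTriangles n r).card : ℝ) →
        (((Finset.powersetCard 2 (Finset.univ : Finset (Fin n))).filter
            (fun s => ((Finset.univ.filter (fun w : Fin n =>
              ∃ u v, u ∈ s ∧ v ∈ s ∧ u ≠ v ∧ r u v ∧ r v w ∧ r w u)).card : ℝ)
              ≤ ε₂ * n)).card : ℝ) < ε₁ * n ^ 2 := by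
  have hε1 : 0 < ε₁ := by linarith
  have h24 : 24 * ε₂ < ε₁ := by linarith
  have hcpos : 0 < ε₁ ^ 2 * (ε₁ - 24 * ε₂) / 24 ^ 3 := by
    apply div_pos (mul_pos (pow_pos hε1 2) (by linarith)) (by norm_num)
  refine ⟨ε₁ ^ 2 * (ε₁ - 24 * ε₂) / 24 ^ 3 * 2, by linarith, ⌈(24:ℝ)/ε₁⌉₊ + 24, ?_⟩
  intro n hn r hT hc3
  by_contra hcon
  push_neg at hcon
  -- basic size facts
  have hn24 : 24 < n := by omega
  have hn1 : 1 ≤ n := by omega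
  have hm0 : (0:ℝ) < n := by positivity
  have hmN : 24 / ε₁ < (n:ℝ) := by
    have h1' : ((⌈(24:ℝ)/ε₁⌉₊ + 24 : ℕ) : ℝ) < (n:ℝ) := by exact_mod_cast hn
    have h2' := Nat.le_ceil ((24:ℝ)/ε₁)
    push_cast at h1'
    linarith
  have hε1m : 24 < ε₁ * n := by
    rw [div_lt_iff₀ hε1] at hmN
    linarith
  -- notation
  set m : ℝ := (n : ℝ) with hm
  set Nout : Fin n → Finset (Fin n) := fun v => Finset.univ.filter (fun w => r v w) with hNout
  set d : Fin n → ℕ := fun v => (Nout v).card with hd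
  set x : Fin n → ℝ := fun v => (d v : ℝ) - (m - 1)/2 with hx
  have hNmem : ∀ v w : Fin n, w ∈ Nout v ↔ r v w := by
    intro v w; rw [hNout]; simp
  -- degree sum
  have hsumd : 2 * ∑ v : Fin n, d v = n * (n - 1) := by
    have h := double_count hT (Finset.univ : Finset (Fin n))
    simpa [Finset.card_univ] using h
  have hsumdR : ∑ v : Fin n, (d v : ℝ) = m * (m - 1) / 2 := by
    have h : ((2 * ∑ v : Fin n, d v : ℕ) : ℝ) = ((n * (n-1) : ℕ) : ℝ) := by
      exact_mod_cast congrArg (fun k : ℕ => (k:ℝ)) hsumd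
    push_cast [Nat.cast_sub hn1] at h
    linarith
  -- cyclic triangle count bound
  have hkey : ((cyclicTriangles n r).card : ℝ) ≤ m^3/24 - (∑ v : Fin n, x v ^ 2)/2 := by
    have hN1 := cyc_card_bound hT
    have hch3 : ((n.choose 3 : ℕ) : ℝ) ≤ m * (m-1) * (m-2) / 6 := by
      have h6 : n.choose 3 * 6 = n * (n-1) * (n-2) := by
        rw [Nat.choose_eq_descFactorial_div_factorial]
        have hfac : Nat.factorial 3 = 6 := by decide
        rw [hfac, Nat.div_mul_cancel (by rw [← hfac]; exact Nat.factorial_dvd_descFactorial n 3)]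
        simp [Nat.descFactorial_succ, Nat.descFactorial_zero]
        ring
      have h2n : 2 ≤ n := by omega
      have hcast : ((n.choose 3 * 6 : ℕ):ℝ) = ((n * (n-1) * (n-2) : ℕ):ℝ) := by
        exact_mod_cast congrArg (fun k : ℕ => (k:ℝ)) h6
      push_cast [Nat.cast_sub hn1, Nat.cast_sub h2n] at hcast
      linarith
    have hcast1 : ((cyclicTriangles n r).card : ℝ)
        + ∑ v : Fin n, (((d v).choose 2 : ℕ) : ℝ) ≤ ((n.choose 3 : ℕ) : ℝ) := by
      exact_mod_cast hN1
    have hch2 : ∑ v : Fin n, (((d v).choose 2 : ℕ) : ℝ)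
        = (∑ v : Fin n, (d v : ℝ)^2 - ∑ v : Fin n, (d v : ℝ)) / 2 := by
      have hpt : ∀ v : Fin n, (((d v).choose 2 : ℕ) : ℝ) = ((d v:ℝ)^2 - (d v:ℝ))/2 := by
        intro v; rw [Nat.cast_choose_two]; ring
      rw [Finset.sum_congr rfl (fun v _ => hpt v), ← Finset.sum_div, Finset.sum_sub_distrib]
    have hxsum : ∑ v : Fin n, x v ^ 2 = ∑ v : Fin n, (d v:ℝ)^2 - m*(m-1)^2/4 := by
      have hpt : ∑ v : Fin n, x v ^ 2
          = ∑ v : Fin n, ((d v:ℝ)^2 - (m-1)*(d v:ℝ) + ((m-1)/2)^2) :=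
        Finset.sum_congr rfl (fun v _ => by rw [hx]; ring)
      rw [hpt, Finset.sum_add_distrib, Finset.sum_sub_distrib, ← Finset.mul_sum, hsumdR,
        Finset.sum_const, Finset.card_univ, Fintype.card_fin, nsmul_eq_mul]
      ring
    rw [hch2, hsumdR] at hcast1
    nlinarith [hm0, hcast1, hch3, hxsum]
  -- degree regularity
  have hx2 : ∑ v : Fin n, x v ^ 2 ≤ ε₁^2*(ε₁-24*ε₂)/3456 * m^3 := by
    nlinarith [hc3, hkey]
  -- bad vertices
  set Bad : Finset (Fin n) := Finset.univ.filter (fun v => ε₁/24 * m < |x v|) with hBad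
  have hBadcard : (Bad.card : ℝ) ≤ (ε₁ - 24*ε₂) * m / 6 := by
    have hb1 : ∀ v ∈ Bad, (ε₁/24*m)^2 ≤ x v ^ 2 := by
      intro v hv
      have hv' : ε₁/24 * m < |x v| := (Finset.mem_filter.mp hv).2
      have h0 : (0:ℝ) ≤ ε₁/24*m := by positivity
      calc (ε₁/24*m)^2 = (ε₁/24*m)*(ε₁/24*m) := by ring
        _ ≤ |x v| * |x v| := mul_self_le_mul_self h0 hv'.le
        _ = x v ^ 2 := by rw [abs_mul_abs_self]; ring
    have hb2 : (Bad.card : ℝ) * (ε₁/24*m)^2 ≤ ∑ v ∈ Bad, x v ^ 2 := by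
      have := Finset.card_nsmul_le_sum Bad (fun v => x v ^ 2) ((ε₁/24*m)^2) hb1
      simpa [nsmul_eq_mul] using this
    have hb3 : ∑ v ∈ Bad, x v ^ 2 ≤ ∑ v : Fin n, x v ^ 2 :=
      Finset.sum_le_sum_of_subset_of_nonneg (Finset.subset_univ _)
        (fun v _ _ => sq_nonneg (x v))
    have heq : ε₁^2*(ε₁-24*ε₂)/3456 * m^3 = ((ε₁ - 24*ε₂) * m / 6) * (ε₁/24*m)^2 := by ring
    have hb4 : (Bad.card : ℝ) * (ε₁/24*m)^2 ≤ ((ε₁ - 24*ε₂) * m / 6) * (ε₁/24*m)^2 := by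
      rw [← heq]; linarith [hx2, hb2, hb3]
    have hq : (0:ℝ) < (ε₁/24*m)^2 := by positivity
    exact le_of_mul_le_mul_right hb4 hq
  -- the deficient pair set
  set Dset : Finset (Finset (Fin n)) :=
      (Finset.powersetCard 2 (Finset.univ : Finset (Fin n))).filter
        (fun s => ((Finset.univ.filter (fun w : Fin n =>
          ∃ u v, u ∈ s ∧ v ∈ s ∧ u ≠ v ∧ r u v ∧ r v w ∧ r w u)).card : ℝ)
          ≤ ε₂ * m) with hDset
  have hD2 : ∀ s ∈ Dset, s.card = 2 := by
    intro s hs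
    exact (Finset.mem_powersetCard.mp (Finset.mem_filter.mp hs).1).2
  -- good deficient pairs
  set GD : Finset (Finset (Fin n)) := Dset.filter (fun s => ∀ v ∈ s, v ∉ Bad) with hGD
  have hGDsub : GD ⊆ Dset := Finset.filter_subset _ _
  have hGDcard : ε₁ * m^2 - (Bad.card:ℝ) * m ≤ (GD.card : ℝ) := by
    have hsplit : Dset ⊆ GD ∪ Bad.biUnion (fun b => Dset.filter (fun s => b ∈ s)) := by
      intro s hs
      by_cases hall : ∀ v ∈ s, v ∉ Bad
      · exact Finset.mem_union_left _ (Finset.mem_filter.mpr ⟨hs, hall⟩)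
      · push_neg at hall
        obtain ⟨v, hv1, hv2⟩ := hall
        exact Finset.mem_union_right _
          (Finset.mem_biUnion.mpr ⟨v, hv2, Finset.mem_filter.mpr ⟨hs, hv1⟩⟩)
    have hcU : Dset.card ≤ GD.card + Bad.card * n := by
      calc Dset.card ≤ (GD ∪ Bad.biUnion (fun b => Dset.filter (fun s => b ∈ s))).card :=
            Finset.card_le_card hsplit
        _ ≤ GD.card + (Bad.biUnion (fun b => Dset.filter (fun s => b ∈ s))).card :=
            Finset.card_union_le _ _
        _ ≤ GD.card + ∑ b ∈ Bad, (Dset.filter (fun s => b ∈ s)).card := by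
            gcongr
            exact Finset.card_biUnion_le
        _ ≤ GD.card + ∑ b ∈ Bad, n := by
            gcongr with b hb
            exact card_pairs_containing Dset hD2 b
        _ = GD.card + Bad.card * n := by rw [Finset.sum_const, smul_eq_mul]
    have h1R : (Dset.card : ℝ) ≤ (GD.card : ℝ) + (Bad.card : ℝ) * m := by
      rw [hm]; exact_mod_cast hcU
    linarith [hcon]
  -- max degree vertex in GD
  have hdegsum : ∑ v : Fin n, (GD.filter (fun s => v ∈ s)).card = 2 * GD.card := by
    have e1 : ∀ v : Fin n, (GD.filter (fun s => v ∈ s)).card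
        = ∑ s ∈ GD, if v ∈ s then 1 else 0 := fun v => Finset.card_filter _ _
    rw [Finset.sum_congr rfl (fun v _ => e1 v), Finset.sum_comm]
    have e2 : ∀ s ∈ GD, ∑ v : Fin n, (if v ∈ s then 1 else 0) = 2 := by
      intro s hs
      rw [← Finset.card_filter, Finset.filter_univ_mem]
      exact hD2 s (hGDsub hs)
    rw [Finset.sum_congr rfl e2, Finset.sum_const, smul_eq_mul, mul_comm]
  have hneU : (Finset.univ : Finset (Fin n)).Nonempty := ⟨⟨0, by omega⟩, Finset.mem_univ _⟩
  obtain ⟨u, -, humax⟩ := Finset.exists_max_image Finset.univ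
    (fun v => (GD.filter (fun s => v ∈ s)).card) hneU
  have hud : 2 * GD.card ≤ n * (GD.filter (fun s => u ∈ s)).card := by
    calc 2 * GD.card = ∑ v : Fin n, (GD.filter (fun s => v ∈ s)).card := hdegsum.symm
      _ ≤ (Finset.univ : Finset (Fin n)).card * (GD.filter (fun s => u ∈ s)).card :=
          Finset.sum_le_card_nsmul _ _ _ (fun v _ => humax v (Finset.mem_univ v))
      _ = n * (GD.filter (fun s => u ∈ s)).card := by
          rw [Finset.card_univ, Fintype.card_fin]
  -- the set of partners of u
  set S : Finset (Fin n) := Finset.univ.filter (fun v => v ≠ u ∧ insert u {v} ∈ GD) with hS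
  have hdegS : (GD.filter (fun s => u ∈ s)).card ≤ S.card := by
    refine Finset.card_le_card_of_injOn (fun s => oth u s) ?_ ?_
    · intro s hs
      obtain ⟨hs1, hs2⟩ := Finset.mem_filter.mp hs
      obtain ⟨ho1, ho2, ho3⟩ := oth_spec hs2 (hD2 s (hGDsub hs1))
      rw [hS]
      refine Finset.mem_filter.mpr ⟨Finset.mem_univ _, ho2, ?_⟩
      rw [← ho3]; exact hs1
    · intro s hs t ht hst
      simp only [Finset.coe_filter, Set.mem_setOf_eq] at hs ht
      have hsp := (oth_spec hs.2 (hD2 s (hGDsub hs.1))).2.2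
      have htp := (oth_spec ht.2 (hD2 t (hGDsub ht.1))).2.2
      have hst' : oth u s = oth u t := hst
      rw [hsp, htp, hst']
  have hScard : (5/3) * ε₁ * m ≤ (S.card : ℝ) := by
    have c1 : (2:ℝ) * (GD.card:ℝ) ≤ m * (S.card:ℝ) := by
      have := le_trans hud (Nat.mul_le_mul_left n hdegS)
      rw [hm]; exact_mod_cast this
    have c2 : (5/6) * ε₁ * m^2 ≤ (GD.card : ℝ) := by nlinarith [hGDcard, hBadcard, hm0, h24]
    have c3 : m * ((5/3) * ε₁ * m) ≤ m * (S.card:ℝ) := by nlinarith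
    exact le_of_mul_le_mul_left c3 hm0
  -- similarity of out-neighbourhoods for good deficient pairs
  have horient : ∀ a b : Fin n, a ≠ b → r a b → insert a {b} ∈ GD →
      ((Nout b \ Nout a).card : ℝ) ≤ ε₂ * m ∧
      ((Nout a \ Nout b).card : ℝ) ≤ ε₂ * m + 2*(ε₁/24)*m := by
    intro a b hab hr hGDm
    have hmem' := Finset.mem_filter.mp hGDm
    have hDm : insert a {b} ∈ Dset := hmem'.1
    have hW : ((Finset.univ.filter (fun w : Fin n =>
        ∃ x y, x ∈ insert a ({b} : Finset (Fin n)) ∧ y ∈ insert a ({b} : Finset (Fin n)) ∧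
          x ≠ y ∧ r x y ∧ r y w ∧ r w x)).card : ℝ) ≤ ε₂ * m := (Finset.mem_filter.mp hDm).2
    have hsub : Nout b \ Nout a ⊆ Finset.univ.filter (fun w : Fin n =>
        ∃ x y, x ∈ insert a ({b} : Finset (Fin n)) ∧ y ∈ insert a ({b} : Finset (Fin n)) ∧
          x ≠ y ∧ r x y ∧ r y w ∧ r w x) := by
      intro w hw
      obtain ⟨hw1, hw2⟩ := Finset.mem_sdiff.mp hw
      have hbw : r b w := (hNmem b w).mp hw1
      have haw : ¬ r a w := fun h => hw2 ((hNmem a w).mpr h)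
      have hwa : w ≠ a := by rintro rfl; exact tourn_asymm hT hr hbw
      have hrwa : r w a := tourn_total hT (Ne.symm hwa) haw
      exact Finset.mem_filter.mpr ⟨Finset.mem_univ _,
        a, b, Finset.mem_insert_self _ _,
        Finset.mem_insert_of_mem (Finset.mem_singleton_self _), hab, hr, hbw, hrwa⟩
    have hba : ((Nout b \ Nout a).card : ℝ) ≤ ε₂ * m :=
      le_trans (by exact_mod_cast Finset.card_le_card hsub) hW
    have e1 : ((Nout a \ Nout b).card : ℝ) + ((Nout a ∩ Nout b).card : ℝ) = (d a : ℝ) := by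
      exact_mod_cast congrArg (fun k : ℕ => (k:ℝ))
        (Finset.card_sdiff_add_card_inter (Nout a) (Nout b))
    have e2 : ((Nout b \ Nout a).card : ℝ) + ((Nout a ∩ Nout b).card : ℝ) = (d b : ℝ) := by
      rw [Finset.inter_comm]
      exact_mod_cast congrArg (fun k : ℕ => (k:ℝ))
        (Finset.card_sdiff_add_card_inter (Nout b) (Nout a))
    have hga : a ∉ Bad := hmem'.2 a (Finset.mem_insert_self _ _)
    have hgb : b ∉ Bad := hmem'.2 b (Finset.mem_insert_of_mem (Finset.mem_singleton_self _))
    have hxa : |x a| ≤ ε₁/24 * m := by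
      by_contra hcon'
      exact hga (Finset.mem_filter.mpr ⟨Finset.mem_univ _, lt_of_not_ge hcon'⟩)
    have hxb : |x b| ≤ ε₁/24 * m := by
      by_contra hcon'
      exact hgb (Finset.mem_filter.mpr ⟨Finset.mem_univ _, lt_of_not_ge hcon'⟩)
    have hda : (d a : ℝ) - (d b : ℝ) = x a - x b := by simp only [hx]; ring
    refine ⟨hba, ?_⟩
    have ha1 := abs_le.mp hxa
    have hb1 := abs_le.mp hxb
    linarith [e1, e2, hba, hda, ha1.2, hb1.1]
  have hgm : (0:ℝ) ≤ 2*(ε₁/24)*m := by nlinarith [mul_pos hε1 hm0]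
  have hDelta : ∀ v ∈ S, ((Nout u \ Nout v).card : ℝ) ≤ ε₂*m + 2*(ε₁/24)*m ∧
      ((Nout v \ Nout u).card : ℝ) ≤ ε₂*m + 2*(ε₁/24)*m := by
    intro v hv
    have hv' := Finset.mem_filter.mp hv
    obtain ⟨hvu, hvGD⟩ := hv'.2
    by_cases hr : r u v
    · have h := horient u v (Ne.symm hvu) hr hvGD
      exact ⟨h.2, by linarith [h.1]⟩
    · have hruv : r v u := tourn_total hT (Ne.symm hvu) hr
      have hpair : insert v {u} ∈ GD := by
        have hcomm : ({v, u} : Finset (Fin n)) = ({u, v} : Finset (Fin n)) :=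
          Finset.pair_comm v u
        rw [show (insert v ({u} : Finset (Fin n))) = ({v, u} : Finset (Fin n)) from rfl, hcomm]
        exact hvGD
      have h := horient v u hvu hruv hpair
      exact ⟨by linarith [h.1], h.2⟩
  have htri : ∀ v ∈ S, ∀ w ∈ S, ((Nout v \ Nout w).card : ℝ) ≤ 2*ε₂*m + 4*(ε₁/24)*m := by
    intro v hv w hw
    have hsub : Nout v \ Nout w ⊆ (Nout v \ Nout u) ∪ (Nout u \ Nout w) := by
      intro z hz
      obtain ⟨hz1, hz2⟩ := Finset.mem_sdiff.mp hz
      by_cases hzu : z ∈ Nout u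
      · exact Finset.mem_union_right _ (Finset.mem_sdiff.mpr ⟨hzu, hz2⟩)
      · exact Finset.mem_union_left _ (Finset.mem_sdiff.mpr ⟨hz1, hzu⟩)
    have hcu : ((Nout v \ Nout w).card:ℝ)
        ≤ ((Nout v \ Nout u).card:ℝ) + ((Nout u \ Nout w).card:ℝ) := by
      have hu1 := Finset.card_le_card hsub
      have hu2 := Finset.card_union_le (Nout v \ Nout u) (Nout u \ Nout w)
      exact_mod_cast le_trans hu1 hu2
    linarith [(hDelta v hv).2, (hDelta w hw).1]
  -- a vertex of large out-degree within S
  have hSpos : (0:ℝ) < (S.card:ℝ) := by nlinarith [hScard, mul_pos hε1 hm0]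
  have hSne : S.Nonempty := Finset.card_pos.mp (by exact_mod_cast hSpos)
  obtain ⟨v₀, hv₀S, hv₀max⟩ := Finset.exists_max_image S
    (fun v => (S.filter (fun z => r v z)).card) hSne
  set B : Finset (Fin n) := S.filter (fun z => r v₀ z) with hB
  have hSB : S.card * (S.card - 1) ≤ 2 * (S.card * B.card) := by
    have h := Finset.sum_le_card_nsmul S (fun v => (S.filter (fun w => r v w)).card) B.card
      (fun v hv => hv₀max v hv)
    rw [smul_eq_mul] at h
    calc S.card * (S.card - 1) = 2 * ∑ v ∈ S, (S.filter (fun w => r v w)).card :=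
          (double_count hT S).symm
      _ ≤ 2 * (S.card * B.card) := by omega
  have hS1 : 1 ≤ S.card := hSne.card_pos
  have hBge : (S.card : ℝ) - 1 ≤ 2 * (B.card : ℝ) := by
    have hc : ((S.card * (S.card - 1) : ℕ) : ℝ) ≤ ((2 * (S.card * B.card) : ℕ) : ℝ) := by
      exact_mod_cast hSB
    push_cast [Nat.cast_sub hS1] at hc
    nlinarith [hc, hSpos]
  have hBcardlow : (5/6)*ε₁*m - 1/2 ≤ (B.card:ℝ) := by linarith only [hScard, hBge]
  have hBpos : (0:ℝ) < (B.card:ℝ) := by linarith only [hε1m, hBcardlow]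
  have hB1 : 1 ≤ B.card := by exact_mod_cast Nat.succ_le_of_lt (by exact_mod_cast hBpos)
  have hBsub : B ⊆ S := Finset.filter_subset _ _
  have hBup : ∀ w ∈ B, (B.card : ℝ) - ((B.filter (fun z => r w z)).card : ℝ)
      ≤ 2*ε₂*m + 4*(ε₁/24)*m := by
    intro w hw
    have hwS : w ∈ S := hBsub hw
    have hsub2 : B \ B.filter (fun z => r w z) ⊆ Nout v₀ \ Nout w := by
      intro z hz
      obtain ⟨hzB, hz2⟩ := Finset.mem_sdiff.mp hz
      have hz3 : ¬ r w z := fun h => hz2 (Finset.mem_filter.mpr ⟨hzB, h⟩)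
      have hzv : r v₀ z := (Finset.mem_filter.mp hzB).2
      exact Finset.mem_sdiff.mpr ⟨(hNmem v₀ z).mpr hzv, fun hc => hz3 ((hNmem w z).mp hc)⟩
    have hcards : (B \ B.filter (fun z => r w z)).card
        = B.card - (B.filter (fun z => r w z)).card :=
      Finset.card_sdiff_of_subset (Finset.filter_subset _ _)
    have hle2 : (B \ B.filter (fun z => r w z)).card ≤ (Nout v₀ \ Nout w).card :=
      Finset.card_le_card hsub2
    have hfle : (B.filter (fun z => r w z)).card ≤ B.card :=
      Finset.card_le_card (Finset.filter_subset _ _)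
    have htb := htri v₀ hv₀S w hwS
    have hcast : ((B.card - (B.filter (fun z => r w z)).card : ℕ):ℝ)
        ≤ ((Nout v₀ \ Nout w).card : ℝ) := by
      rw [← hcards]; exact_mod_cast hle2
    push_cast [Nat.cast_sub hfle] at hcast
    linarith
  have hlowsum : (B.card:ℝ) * ((B.card:ℝ) - (2*ε₂*m + 4*(ε₁/24)*m))
      ≤ ∑ w ∈ B, ((B.filter (fun z => r w z)).card : ℝ) := by
    have h := Finset.card_nsmul_le_sum B (fun w => ((B.filter (fun z => r w z)).card : ℝ))
      ((B.card:ℝ) - (2*ε₂*m + 4*(ε₁/24)*m)) (fun w hw => by linarith [hBup w hw])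
    simpa [nsmul_eq_mul] using h
  have hdcB : (B.card:ℝ) * ((B.card:ℝ) - 1)
      = 2 * ∑ w ∈ B, ((B.filter (fun z => r w z)).card : ℝ) := by
    have h := double_count hT B
    have hcast : ((2 * ∑ w ∈ B, (B.filter (fun z => r w z)).card : ℕ):ℝ)
        = ((B.card * (B.card - 1) : ℕ):ℝ) := by
      exact_mod_cast congrArg (fun k:ℕ => (k:ℝ)) h
    push_cast [Nat.cast_sub hB1] at hcast
    linarith
  have hup : (B.card:ℝ) ≤ 2*(2*ε₂*m + 4*(ε₁/24)*m) - 1 := by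
    nlinarith [hlowsum, hdcB, hBpos]
  have hee : 24 * (ε₂ * m) < ε₁ * m := by nlinarith [h24, hm0]
  linarith only [hBcardlow, hup, hee, hε1m]
end

section
/- In every 3-uniform hypergraph H that contains no copy of K₄⁻ and no copy of C₅⁻, if H is the set of cyclic triangles of a tournament T that contains no copy of the tournament D₅, then for every vertex v, every connected component of the link graph of v is a complete bipartite graph. -/
/-- `{x, y, z}` is a cyclic triangle of the tournament `r` (as an unordered triple). -/
def Cyc {V : Type*} (r : V → V → Prop) (x y z : V) : Prop :=
  (r x y ∧ r y z ∧ r z x) ∨ (r y x ∧ r z y ∧ r x z)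

/-- The link graph of `v` in the 3-graph of cyclic triangles of `r`:
`x ∼ y` iff `{v, x, y}` is a cyclic triangle. -/
def linkGraph {V : Type*} (r : V → V → Prop) (v : V) : SimpleGraph V :=
  SimpleGraph.fromRel (fun x y => r v x ∧ r x y ∧ r y v)

section Aux

variable {V : Type*} {r : V → V → Prop}

lemma tour_ne (hr : IsTournament r) {x y : V} (h : r x y) : x ≠ y := by
  rintro rfl; exact hr.1 x h

lemma tour_asymm (hr : IsTournament r) {x y : V} (h1 : r x y) (h2 : r y x) : False :=
  ((hr.2 x y (tour_ne hr h1)).mp h1) h2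

lemma tour_total (hr : IsTournament r) {x y : V} (hne : x ≠ y) : r x y ∨ r y x := by
  by_cases h : r x y
  · exact Or.inl h
  · exact Or.inr ((hr.2 y x hne.symm).mpr (fun h3 => h h3))

/-- The key structural lemma: given cyclic triangles `v→a→b→v`, `v→c→b→v`, `v→c→d→v`,
we must have `r a d` (otherwise we find a `C₅⁻` or a `D₅`). -/
lemma key_lemma (hr : IsTournament r)
    (hD5 : ¬ ∃ a b c d e : V,
      r a b ∧ r a c ∧ r d a ∧ r e a ∧ r b c ∧ r b d ∧ r b e ∧ r c d ∧ r e c ∧ r e d)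
    (hC5 : ¬ ∃ v0 v1 v2 v3 v4 : V, v1 ≠ v4 ∧
      Cyc r v0 v1 v2 ∧ Cyc r v1 v2 v3 ∧ Cyc r v2 v3 v4 ∧ Cyc r v3 v4 v0)
    {v a b c d : V}
    (hva : r v a) (hab : r a b) (hbv : r b v)
    (hvc : r v c) (hcb : r c b) (hcd : r c d) (hdv : r d v) : r a d := by
  by_cases hac : a = c
  · subst hac; exact hcd
  by_cases hbd : b = d
  · subst hbd; exact hab
  by_contra had
  have hda : r d a := by
    have hne : a ≠ d := fun h => tour_asymm hr hva (h ▸ hdv)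
    rcases tour_total hr hne with h | h
    · exact absurd h had
    · exact h
  rcases tour_total hr hac with hAC | hCA
  · -- r a c : C₅⁻ on (a, b, v, c, d)
    exact hC5 ⟨a, b, v, c, d, hbd,
      Or.inl ⟨hab, hbv, hva⟩, Or.inl ⟨hbv, hvc, hcb⟩,
      Or.inl ⟨hvc, hcd, hdv⟩, Or.inl ⟨hcd, hda, hAC⟩⟩
  · rcases tour_total hr hbd with hBD | hDB
    · -- r b d : C₅⁻ on (d, a, b, v, c)
      exact hC5 ⟨d, a, b, v, c, hac,
        Or.inl ⟨hda, hab, hBD⟩, Or.inl ⟨hab, hbv, hva⟩,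
        Or.inl ⟨hbv, hvc, hcb⟩, Or.inl ⟨hvc, hcd, hdv⟩⟩
    · -- r d b : D₅ on (v, c, a, b, d)
      exact hD5 ⟨v, c, a, b, d, hvc, hva, hbv, hdv, hCA, hcb, hcd, hab, hda, hDB⟩

lemma link_adj_of (hr : IsTournament r) {v x y : V}
    (hx : r v x) (hxy : r x y) (hy : r y v) : (linkGraph r v).Adj x y := by
  rw [linkGraph, SimpleGraph.fromRel_adj]
  refine ⟨fun h => tour_asymm hr hx (h ▸ hy), Or.inl ⟨hx, hxy, hy⟩⟩

/-- If `x ~ y` in the link graph and `v → x`, then `x → y → v`. -/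
lemma link_adj_out (hr : IsTournament r) {v x y : V}
    (h : (linkGraph r v).Adj x y) (hx : r v x) : r x y ∧ r y v := by
  rw [linkGraph, SimpleGraph.fromRel_adj] at h
  obtain ⟨hne, h | h⟩ := h
  · exact ⟨h.2.1, h.2.2⟩
  · exact absurd h.2.2 (fun hxv => tour_asymm hr hx hxv)

/-- If `x ~ y` in the link graph and `x → v`, then `v → y → x`. -/
lemma link_adj_in (hr : IsTournament r) {v x y : V}
    (h : (linkGraph r v).Adj x y) (hx : r x v) : r v y ∧ r y x := by
  rw [linkGraph, SimpleGraph.fromRel_adj] at h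
  obtain ⟨hne, h | h⟩ := h
  · exact absurd h.1 (fun hvx => tour_asymm hr hvx hx)
  · exact ⟨h.1, h.2.1⟩

lemma walk_claim (hr : IsTournament r)
    (hD5 : ¬ ∃ a b c d e : V,
      r a b ∧ r a c ∧ r d a ∧ r e a ∧ r b c ∧ r b d ∧ r b e ∧ r c d ∧ r e c ∧ r e d)
    (hC5 : ¬ ∃ v0 v1 v2 v3 v4 : V, v1 ≠ v4 ∧
      Cyc r v0 v1 v2 ∧ Cyc r v1 v2 v3 ∧ Cyc r v2 v3 v4 ∧ Cyc r v3 v4 v0)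
    (v : V) :
    ∀ (n : ℕ) (x y : V) (p : (linkGraph r v).Walk x y), p.length = n →
      r v x → r y v → (linkGraph r v).Adj x y := by
  intro n
  induction n using Nat.strong_induction_on with
  | _ n ih =>
    intro x y p hlen hx hy
    cases p with
    | nil => exact absurd hy (fun h => tour_asymm hr hx h)
    | cons h p' =>
      cases p' with
      | nil => exact h
      | @cons w1 w2 _ h2 q =>
        have h1 := link_adj_out hr h hx
        have h2' := link_adj_in hr h2 h1.2
        have hq : q.length < n := by
          simp only [SimpleGraph.Walk.length_cons] at hlen; omega
        have hadj := ih q.length hq w2 y q rfl h2'.1 hy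
        have h3 := link_adj_out hr hadj h2'.1
        exact link_adj_of hr hx
          (key_lemma hr hD5 hC5 hx h1.1 h1.2 h2'.1 h2'.2 h3.1 h3.2) hy

end Aux

/-- Claim 4.3: let `T` be a tournament containing no copy of `D₅`, whose 3-graph of
cyclic triangles contains no copy of `K₄⁻` and no copy of `C₅⁻`. Then for every
vertex `v`, every connected component of the link graph of `v` is complete
bipartite. -/
theorem stmt19 {V : Type*} (r : V → V → Prop) (hr : IsTournament r)
    (hD5 : ¬ ∃ a b c d e : V,
      r a b ∧ r a c ∧ r d a ∧ r e a ∧ r b c ∧ r b d ∧ r b e ∧ r c d ∧ r e c ∧ r e d)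
    (hK4 : ¬ ∃ a b c d : V, Cyc r a b c ∧ Cyc r a b d ∧ Cyc r a c d)
    (hC5 : ¬ ∃ v0 v1 v2 v3 v4 : V, v1 ≠ v4 ∧
      Cyc r v0 v1 v2 ∧ Cyc r v1 v2 v3 ∧ Cyc r v2 v3 v4 ∧ Cyc r v3 v4 v0)
    (v : V) :
    ∀ c : (linkGraph r v).ConnectedComponent,
      ∃ A B : Set V, A ∪ B = c.supp ∧ A ∩ B = ∅ ∧
        ∀ x ∈ c.supp, ∀ y ∈ c.supp,
          ((linkGraph r v).Adj x y ↔ ((x ∈ A ∧ y ∈ B) ∨ (x ∈ B ∧ y ∈ A))) := by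
  intro c
  have hiso : ∀ w, ¬ (linkGraph r v).Adj v w := by
    intro w hw
    rw [linkGraph, SimpleGraph.fromRel_adj] at hw
    obtain ⟨_, h | h⟩ := hw
    · exact hr.1 v h.1
    · exact hr.1 v h.2.2
  by_cases hv : v ∈ c.supp
  · -- the component of the isolated vertex v : supp = {v}
    have hsupp : c.supp = {v} := by
      ext x
      rw [SimpleGraph.ConnectedComponent.mem_supp_iff] at hv ⊢
      constructor
      · intro hx
        have : (linkGraph r v).Reachable v x :=
          (SimpleGraph.ConnectedComponent.eq).mp (hv.trans hx.symm)
        obtain ⟨p⟩ := this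
        cases p with
        | nil => rfl
        | cons h _ => exact absurd h (hiso _)
      · rintro rfl; exact hv
    refine ⟨{v}, ∅, ?_, ?_, ?_⟩
    · rw [hsupp]; simp
    · simp
    · intro x hx y hy
      rw [hsupp] at hx hy
      simp only [Set.mem_singleton_iff] at hx hy
      subst hx; subst hy
      simp
  · -- v not in the component: bipartition by in/out neighbors of v
    refine ⟨{x | x ∈ c.supp ∧ r v x}, {x | x ∈ c.supp ∧ r x v}, ?_, ?_, ?_⟩
    · ext x
      simp only [Set.mem_union, Set.mem_setOf_eq]
      constructor
      · rintro (⟨h, _⟩ | ⟨h, _⟩) <;> exact h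
      · intro hx
        have hxv : x ≠ v := by rintro rfl; exact hv hx
        rcases tour_total hr hxv.symm with h | h
        · exact Or.inl ⟨hx, h⟩
        · exact Or.inr ⟨hx, h⟩
    · ext x
      simp only [Set.mem_inter_iff, Set.mem_setOf_eq, Set.mem_empty_iff_false, iff_false]
      rintro ⟨⟨_, h1⟩, ⟨_, h2⟩⟩
      exact tour_asymm hr h1 h2
    · intro x hx y hy
      constructor
      · intro hadj
        rw [linkGraph, SimpleGraph.fromRel_adj] at hadj
        obtain ⟨hne, h | h⟩ := hadj
        · exact Or.inl ⟨⟨hx, h.1⟩, ⟨hy, h.2.2⟩⟩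
        · exact Or.inr ⟨⟨hx, h.2.2⟩, ⟨hy, h.1⟩⟩
      · rintro (⟨⟨_, hvx⟩, ⟨_, hyv⟩⟩ | ⟨⟨_, hxv⟩, ⟨_, hvy⟩⟩)
        · have hreach : (linkGraph r v).Reachable x y := by
            rw [SimpleGraph.ConnectedComponent.mem_supp_iff] at hx hy
            exact (SimpleGraph.ConnectedComponent.eq).mp (hx.trans hy.symm)
          obtain ⟨p⟩ := hreach
          exact walk_claim hr hD5 hC5 v p.length x y p rfl hvx hyv
        · have hreach : (linkGraph r v).Reachable y x := by
            rw [SimpleGraph.ConnectedComponent.mem_supp_iff] at hx hy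
            exact (SimpleGraph.ConnectedComponent.eq).mp (hy.trans hx.symm)
          obtain ⟨p⟩ := hreach
          exact (walk_claim hr hD5 hC5 v p.length y x p rfl hvy hxv).symm
end
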